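/- arXiv:2307.06748 — 10 statements merged into one kernel-verified Lean document; each statement's English description precedes it below -/
import Mathlib

section
/- If X is an S[μ_n]-generator of a ring R (every element of R is uniquely a finite sum Σ_j ι(α_j) X^j with α_j ∈ μ_n ∪ {0}, where ι : μ_n → R^× is an injective group homomorphism), and m is a positive integer, then the class of Y in R[Y]/(Y^m − X) is an S[μ_n]-generator of R[Y]/(Y^m − X). -/
/-- `X` is an `𝕊[μₙ₊]`-generator of `R` relative to `ι : μₙ →* Rˣ`:
every element of `R` is uniquely a finite sum `Σ_j ι(α_j) X^j` with
coefficients `α_j ∈ μₙ ∪ {0}` (a digit is either `0` or of the form `ι g`). -/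
def IsSGenerator {R : Type*} [CommRing R] {G : Type*} [Group G]
    (ι : G →* Rˣ) (X : R) : Prop :=
  ∀ z : R, ∃! f : ℕ →₀ R,
    (∀ j, f j = 0 ∨ ∃ g : G, f j = (ι g : R)) ∧
    (f.sum fun j a => a * X ^ j) = z

section Aux

variable {R S : Type*} [CommRing R] [CommRing S]

/-- Interleave `m` digit-sequences into one, mapped through `φ`. -/
noncomputable def buildAux (φ : R →+* S) {m : ℕ} (hm : 0 < m) (f : Fin m → (ℕ →₀ R)) :
    ℕ →₀ S :=
  Finsupp.onFinset
    (Finset.univ.biUnion fun i : Fin m => (f i).support.image fun j => m * j + (i : ℕ))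
    (fun k => φ (f ⟨k % m, Nat.mod_lt _ hm⟩ (k / m)))
    (by
      intro k hk
      have h1 : f ⟨k % m, Nat.mod_lt _ hm⟩ (k / m) ≠ 0 := by
        intro h; apply hk; rw [h, map_zero]
      simp only [Finset.mem_biUnion, Finset.mem_univ, Finset.mem_image, true_and]
      exact ⟨⟨k % m, Nat.mod_lt _ hm⟩, k / m, Finsupp.mem_support_iff.2 h1,
        by simpa [Nat.mul_comm] using Nat.div_add_mod k m⟩)

theorem buildAux_apply (φ : R →+* S) {m : ℕ} (hm : 0 < m) (f : Fin m → (ℕ →₀ R)) (k : ℕ) :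
    buildAux φ hm f k = φ (f ⟨k % m, Nat.mod_lt _ hm⟩ (k / m)) := rfl

theorem buildAux_sum (φ : R →+* S) {m : ℕ} (hm : 0 < m) (f : Fin m → (ℕ →₀ R))
    (X : R) (y : S) (hy : y ^ m = φ X) :
    ((buildAux φ hm f).sum fun k a => a * y ^ k) =
      ∑ i : Fin m, φ ((f i).sum fun j a => a * X ^ j) * y ^ (i : ℕ) := by
  classical
  unfold buildAux
  rw [Finsupp.sum_of_support_subset _ Finsupp.support_onFinset_subset (fun k a => a * y ^ k)
    (fun k _ => zero_mul _)]
  rw [Finset.sum_biUnion]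
  · refine Finset.sum_congr rfl fun i _ => ?_
    rw [Finset.sum_image (fun a _ b _ h => Nat.eq_of_mul_eq_mul_left hm (by omega))]
    rw [Finsupp.sum, map_sum, Finset.sum_mul]
    refine Finset.sum_congr rfl fun j _ => ?_
    have hmod : (m * j + (i : ℕ)) % m = (i : ℕ) := by
      rw [Nat.mul_add_mod, Nat.mod_eq_of_lt i.isLt]
    have hdiv : (m * j + (i : ℕ)) / m = j := by
      rw [Nat.mul_add_div hm, Nat.div_eq_of_lt i.isLt, add_zero]
    have hidx : (⟨(m * j + (i : ℕ)) % m, Nat.mod_lt _ hm⟩ : Fin m) = i :=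
      Fin.ext hmod
    simp only [Finsupp.onFinset_apply]
    rw [hidx, hdiv, pow_add, pow_mul, hy, map_mul, map_pow]
    ring
  · intro a _ b _ hab
    rw [Function.onFun, Finset.disjoint_left]
    rintro k hk hk'
    simp only [Finset.mem_image, Finsupp.mem_support_iff] at hk hk'
    obtain ⟨j, -, rfl⟩ := hk
    obtain ⟨j', -, h⟩ := hk'
    apply hab
    have h2 : (m * j + (a : ℕ)) % m = (m * j' + (b : ℕ)) % m := by rw [h]
    rw [Nat.mul_add_mod, Nat.mul_add_mod, Nat.mod_eq_of_lt a.isLt,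
      Nat.mod_eq_of_lt b.isLt] at h2
    exact Fin.ext h2

end Aux

/-- If `X` is an `𝕊[μₙ₊]`-generator of `R` and `m > 0`, then the class of `Y`
in `R[Y]/(Y^m - X)` is an `𝕊[μₙ₊]`-generator of `R[Y]/(Y^m - X)`. -/
theorem root_isSGenerator_adjoinRoot {R : Type*} [CommRing R]
    {G : Type*} [CommGroup G] [Fintype G] [IsCyclic G] {n : ℕ}
    (hcard : Fintype.card G = n) (ι : G →* Rˣ) (hι : Function.Injective ι)
    (X : R) (hX : IsSGenerator ι X) (m : ℕ) (hm : 0 < m) :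
    IsSGenerator
      ((Units.map (algebraMap R
          (AdjoinRoot ((Polynomial.X : Polynomial R) ^ m - Polynomial.C X))).toMonoidHom).comp ι)
      (AdjoinRoot.root ((Polynomial.X : Polynomial R) ^ m - Polynomial.C X)) := by
  classical
  set q : Polynomial R := Polynomial.X ^ m - Polynomial.C X with hqdef
  intro z
  rcases subsingleton_or_nontrivial R with hR | hR
  · have : Subsingleton (AdjoinRoot q) := AdjoinRoot.mk_surjective.subsingleton
    exact ⟨0, ⟨fun j => Or.inl rfl, Subsingleton.elim _ _⟩,
      fun f _ => Subsingleton.elim _ _⟩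
  have hmon : q.Monic := Polynomial.monic_X_pow_sub_C X hm.ne'
  have hdeg : q.natDegree = m := Polynomial.natDegree_X_pow_sub_C
  set φ : R →+* AdjoinRoot q := algebraMap R (AdjoinRoot q) with hφdef
  set y : AdjoinRoot q := AdjoinRoot.root q with hydef
  have hym : y ^ m = φ X := by
    have h0 := AdjoinRoot.eval₂_root q
    rw [hqdef] at h0
    simp only [Polynomial.eval₂_sub, Polynomial.eval₂_pow, Polynomial.eval₂_X,
      Polynomial.eval₂_C, sub_eq_zero] at h0
    rw [hydef, hφdef, AdjoinRoot.algebraMap_eq]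
    exact h0
  set b : Module.Basis (Fin m) R (AdjoinRoot q) :=
    ((AdjoinRoot.powerBasis' hmon).basis.reindex (finCongr hdeg)) with hbdef
  have hbpow : ∀ i : Fin m, b i = y ^ (i : ℕ) := by
    intro i
    rw [hbdef, Module.Basis.reindex_apply, (AdjoinRoot.powerBasis' hmon).basis_eq_pow]
    simp [AdjoinRoot.powerBasis'_gen, hydef]
    rfl
  have hφinj : Function.Injective φ := by
    rw [injective_iff_map_eq_zero]
    intro a ha
    have h1 : φ a = a • b ⟨0, hm⟩ := by
      rw [hbpow, pow_zero, Algebra.algebraMap_eq_smul_one]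
    rw [ha] at h1
    have h2 := congrArg (fun s => b.repr s ⟨0, hm⟩) h1
    simpa using h2.symm
  choose f₀ h₀ using fun i : Fin m => hX (b.repr z i)
  refine ⟨buildAux φ hm f₀, ⟨?_, ?_⟩, ?_⟩
  · -- digit condition for the constructed Finsupp
    intro k
    rw [buildAux_apply]
    rcases (h₀ ⟨k % m, Nat.mod_lt _ hm⟩).1.1 (k / m) with h | ⟨g, hg⟩
    · exact Or.inl (by rw [h, map_zero])
    · exact Or.inr ⟨g, by rw [hg]; rfl⟩
  · -- sum condition
    rw [buildAux_sum φ hm f₀ X y hym]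
    rw [show (∑ i : Fin m, φ ((f₀ i).sum fun j a => a * X ^ j) * y ^ (i : ℕ)) =
        ∑ i : Fin m, b.repr z i • b i from
      Finset.sum_congr rfl fun i _ => by
        rw [(h₀ i).1.2, hbpow, Algebra.smul_def]]
    exact b.sum_repr z
  · -- uniqueness
    rintro F ⟨hdig, hsum⟩
    have hrval : ∀ k : ℕ, ∃ r : R, φ r = F k ∧
        (r = 0 ∨ ∃ g : G, r = (ι g : R)) ∧ (F k = 0 → r = 0) := by
      intro k
      rcases hdig k with h | ⟨g, hg⟩
      · exact ⟨0, by rw [map_zero, h], Or.inl rfl, fun _ => rfl⟩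
      · refine ⟨ι g, by rw [hg]; rfl, Or.inr ⟨g, rfl⟩, fun h0 => ?_⟩
        exfalso
        rw [hg] at h0
        have : φ ((ι g : Rˣ) : R) = φ 0 := by rw [map_zero]; exact h0
        exact Units.ne_zero (ι g) (hφinj this)
    choose r hr using hrval
    set fF : Fin m → (ℕ →₀ R) := fun i =>
      Finsupp.onFinset (F.support.image (· / m)) (fun j => r (m * j + (i : ℕ)))
        (by
          intro j hj
          simp only [Finset.mem_image, Finsupp.mem_support_iff]
          refine ⟨m * j + (i : ℕ), fun h0 => hj ((hr _).2.2 h0), ?_⟩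
          rw [Nat.mul_add_div hm, Nat.div_eq_of_lt i.isLt, add_zero]) with hfFdef
    have hFeq : F = buildAux φ hm fF := by
      ext k
      rw [buildAux_apply]
      show F k = φ (r (m * (k / m) + ((⟨k % m, Nat.mod_lt _ hm⟩ : Fin m) : ℕ)))
      have hk : m * (k / m) + ((⟨k % m, Nat.mod_lt _ hm⟩ : Fin m) : ℕ) = k := by
        show m * (k / m) + k % m = k
        exact Nat.div_add_mod k m
      rw [hk]
      exact ((hr k).1).symm
    have hcoord : ∀ i : Fin m, ((fF i).sum fun j a => a * X ^ j) = b.repr z i := by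
      have h1 : ∑ i : Fin m, ((fF i).sum fun j a => a * X ^ j) • b i = z := by
        rw [← hsum, hFeq, buildAux_sum φ hm fF X y hym]
        exact (Finset.sum_congr rfl fun i _ => by rw [hbpow, Algebra.smul_def]).symm
      intro i
      have h2 : ⇑(b.repr z) = fun i => ((fF i).sum fun j a => a * X ^ j) := by
        rw [← h1, Module.Basis.repr_sum_self]
      rw [congrFun h2 i]
    have hfF : ∀ i : Fin m, fF i = f₀ i := by
      intro i
      refine (h₀ i).2 (fF i) ⟨fun j => ?_, hcoord i⟩
      exact (hr (m * j + (i : ℕ))).2.1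
    rw [hFeq]
    congr 1
    funext i
    exact hfF i
end

section
/- Let X be an S[μ_n]-generator of a ring R with injective ι : μ_n → R^×. Then any z ∈ R admits a unique decomposition z = a + b where a is represented by a polynomial of degree < m in X with coefficients in ι(μ_n ∪ {0}) and b lies in the ideal generated by X^m. -/
/-- If `X` is an `𝕊[μₙ₊]`-generator of `R`, every `z ∈ R` decomposes uniquely
as `z = a + b` with `a` represented by a digit polynomial of degree `< m` in `X`
and `b` in the ideal generated by `X^m`. -/
theorem sGenerator_unique_decomposition {R : Type*} [CommRing R]
    {G : Type*} [CommGroup G] [Fintype G] [IsCyclic G] {n : ℕ}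
    (hcard : Fintype.card G = n) (ι : G →* Rˣ) (hι : Function.Injective ι)
    (X : R) (hX : IsSGenerator ι X) (m : ℕ) (z : R) :
    ∃! p : R × R,
      (∃ f : ℕ →₀ R, (∀ j, f j = 0 ∨ ∃ g : G, f j = (ι g : R)) ∧
        (∀ j, m ≤ j → f j = 0) ∧ (f.sum fun j a => a * X ^ j) = p.1) ∧
      p.2 ∈ Ideal.span {X ^ m} ∧ p.1 + p.2 = z := by
  classical
  obtain ⟨f, ⟨hfd, hfs⟩, hfu⟩ := hX z
  set emb : ℕ ↪ ℕ := ⟨fun j => j + m, add_left_injective m⟩ with hemb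
  set f₁ := f.filter (fun j => j < m) with hf₁
  set f₂ := f.filter (fun j => ¬ j < m) with hf₂
  have hsplit : f₁ + f₂ = f := Finsupp.filter_pos_add_filter_neg f _
  have hzero : ∀ j : ℕ, (0 : R) * X ^ j = 0 := fun j => zero_mul _
  have hadd : ∀ (j : ℕ) (b₁ b₂ : R), (b₁ + b₂) * X ^ j = b₁ * X ^ j + b₂ * X ^ j :=
    fun j b₁ b₂ => add_mul _ _ _
  have hsum12 : (f₁.sum fun j a => a * X ^ j) + (f₂.sum fun j a => a * X ^ j) = z := by
    rw [← Finsupp.sum_add_index' hzero hadd, hsplit, hfs]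
  refine ⟨(f₁.sum fun j a => a * X ^ j, f₂.sum fun j a => a * X ^ j),
    ⟨⟨f₁, ?_, ?_, rfl⟩, ?_, hsum12⟩, ?_⟩
  · intro j
    by_cases h : j < m
    · simpa [hf₁, Finsupp.filter_apply, h] using hfd j
    · simp [hf₁, Finsupp.filter_apply, h]
  · intro j hj
    simp [hf₁, Finsupp.filter_apply, Nat.not_lt.2 hj]
  · rw [Ideal.mem_span_singleton]
    refine Finset.dvd_sum fun j hj => ?_
    rw [hf₂, Finsupp.support_filter, Finset.mem_filter] at hj
    exact Dvd.dvd.mul_left (pow_dvd_pow X (Nat.not_lt.1 hj.2)) _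
  · rintro ⟨a, b⟩ ⟨⟨g0, hg0d, hg0m, hg0s⟩, hb, hab⟩
    rw [Ideal.mem_span_singleton] at hb
    obtain ⟨c, hc⟩ := hb
    obtain ⟨g, ⟨hgd, hgs⟩, -⟩ := hX c
    set h : ℕ →₀ R := g0 + Finsupp.embDomain emb g with hh
    have hembj : ∀ j : ℕ, j < m → Finsupp.embDomain emb g j = 0 := by
      intro j hj
      apply Finsupp.embDomain_notin_range
      rintro ⟨k, rfl⟩
      have : (emb k : ℕ) = k + m := rfl
      omega
    have hdig : ∀ j, h j = 0 ∨ ∃ g' : G, h j = (ι g' : R) := by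
      intro j
      by_cases hj : j < m
      · simpa [hh, Finsupp.add_apply, hembj j hj] using hg0d j
      · have : h j = g (j - m) := by
          have hje : emb (j - m) = j := by
            have : (emb (j - m) : ℕ) = (j - m) + m := rfl
            omega
          rw [hh, Finsupp.add_apply, hg0m j (Nat.not_lt.1 hj), zero_add]
          conv_lhs => rw [← hje]
          rw [Finsupp.embDomain_apply_self]
        rw [this]
        exact hgd (j - m)
    have hhs : (h.sum fun j a => a * X ^ j) = z := by
      rw [hh, Finsupp.sum_add_index' hzero hadd, Finsupp.sum_embDomain, hg0s]
      have : (g.sum fun j a => a * X ^ (emb j)) = c * X ^ m := by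
        rw [← hgs, Finsupp.sum_mul]
        refine Finsupp.sum_congr fun j _ => ?_
        have : (emb j : ℕ) = j + m := rfl
        rw [this, pow_add]; ring
      rw [this, ← hab, hc, mul_comm]
    have hhf : h = f := hfu h ⟨hdig, hhs⟩
    have hg0f : g0 = f₁ := by
      ext j
      by_cases hj : j < m
      · have := congrFun (congrArg (fun k : ℕ →₀ R => (k : ℕ → R)) hhf) j
        simp only [hh, Finsupp.coe_add, Pi.add_apply, hembj j hj, add_zero] at this
        simp [hf₁, Finsupp.filter_apply, hj, ← this]
      · simp [hf₁, Finsupp.filter_apply, hj, hg0m j (Nat.not_lt.1 hj)]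
    have ha : a = f₁.sum fun j a => a * X ^ j := by rw [← hg0f, hg0s]
    have hbv : b = f₂.sum fun j a => a * X ^ j := by
      have := hab
      rw [ha] at this
      linear_combination this - hsum12
    exact Prod.ext ha hbv
end

section
/- Let X be an S[μ_n]-generator of a ring R. Then the canonical ring homomorphism R → lim_m R/(X^m) into the X-adic completion (projective limit of the quotients R/(X^m)) is injective; equivalently, ∩_m (X^m) = 0. -/
/-- If `X` is an `𝕊[μₙ₊]`-generator of `R`, then the canonical map to the
`X`-adic completion is injective; equivalently `⋂ₘ (X^m) = 0`. -/
theorem sGenerator_inter_pow_ideal_eq_bot {R : Type*} [CommRing R]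
    {G : Type*} [CommGroup G] [Fintype G] [IsCyclic G] {n : ℕ}
    (hcard : Fintype.card G = n) (ι : G →* Rˣ) (hι : Function.Injective ι)
    (X : R) (hX : IsSGenerator ι X) :
    ∀ z : R, (∀ m : ℕ, z ∈ Ideal.span {X ^ m}) → z = 0 := by
  intro z hz
  obtain ⟨f, hf, huniq⟩ := hX z
  have hf0 : ∀ j, f j = 0 := by
    intro j
    have hm := hz (j + 1)
    rw [Ideal.mem_span_singleton] at hm
    obtain ⟨c, hc⟩ := hm
    obtain ⟨g, hg, -⟩ := hX c
    set e : ℕ ↪ ℕ := ⟨fun k => k + (j + 1), fun a b h => by simpa using h⟩ with he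
    have key : Finsupp.embDomain e g = f := by
      apply huniq
      constructor
      · intro k
        by_cases hk : k ∈ Set.range e
        · obtain ⟨k', rfl⟩ := hk
          rw [Finsupp.embDomain_apply_self]
          exact hg.1 k'
        · exact Or.inl (Finsupp.embDomain_notin_range _ _ _ hk)
      · rw [Finsupp.sum_embDomain]
        have : (g.sum fun k a => a * X ^ (e k)) = (g.sum fun k a => a * X ^ k) * X ^ (j + 1) := by
          rw [Finsupp.sum_mul]
          apply Finsupp.sum_congr
          intro k _
          simp only [he, Function.Embedding.coeFn_mk]
          show g k * X ^ (k + (j + 1)) = _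
          rw [pow_add, mul_assoc]
        rw [this, hg.2, hc, mul_comm]
    rw [← key]
    apply Finsupp.embDomain_notin_range
    rintro ⟨k, hk⟩
    simp only [he, Function.Embedding.coeFn_mk] at hk
    change k + (j + 1) = j at hk
    omega
  have hfz : f = 0 := Finsupp.ext hf0
  rw [← hf.2, hfz, Finsupp.sum_zero_index]
end

section
/- If there exists a ring R with an S[μ_n]-generator X (with injective ι : μ_n → R^×), then n + 1 is a prime power. -/
section Aux

variable {R : Type*} [CommRing R] {G : Type*} [Group G] {ι : G →* Rˣ} {X : R}

/-- A digit: `0` or `ι g`. -/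
def IsDigit (ι : G →* Rˣ) (d : R) : Prop := d = 0 ∨ ∃ g : G, d = (ι g : R)

/-- Digits are determined by their residues mod `X`. -/
theorem digit_inj (hX : IsSGenerator ι X) {d d' : R}
    (hd : IsDigit ι d) (hd' : IsDigit ι d')
    (h : Ideal.Quotient.mk (Ideal.span {X}) d = Ideal.Quotient.mk (Ideal.span {X}) d') :
    d = d' := by
  classical
  have hmem : d - d' ∈ Ideal.span {X} := by
    rwa [Ideal.Quotient.eq] at h
  obtain ⟨c, hc⟩ := (Ideal.mem_span_singleton).mp hmem
  obtain ⟨f, ⟨hdig, hsum⟩, -⟩ := hX c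
  set F : ℕ →₀ R := Finsupp.single 0 d' + f.mapDomain Nat.succ with hF
  have hF0 : F 0 = d' := by
    rw [hF, Finsupp.add_apply, Finsupp.single_apply, if_pos rfl,
      Finsupp.mapDomain_notin_range]
    · ring
    · rintro ⟨k, hk⟩; exact Nat.succ_ne_zero k hk
  have hFsucc : ∀ k, F (k + 1) = f k := by
    intro k
    rw [hF, Finsupp.add_apply, Finsupp.single_apply, if_neg (by omega),
      Finsupp.mapDomain_apply Nat.succ_injective]
    ring
  have hFdig : ∀ j, F j = 0 ∨ ∃ g : G, F j = (ι g : R) := by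
    intro j
    cases j with
    | zero => rw [hF0]; exact hd'
    | succ k => rw [hFsucc]; exact hdig k
  have hFsum : (F.sum fun j a => a * X ^ j) = d := by
    rw [hF, Finsupp.sum_add_index' (fun j => by simp) (fun j b₁ b₂ => add_mul b₁ b₂ _),
      Finsupp.sum_single_index (by simp),
      Finsupp.sum_mapDomain_index (fun j => by simp) (fun j b₁ b₂ => add_mul b₁ b₂ _)]
    have : (f.sum fun j a => a * X ^ (Nat.succ j)) = c * X := by
      rw [← hsum, Finsupp.sum_mul]
      exact Finsupp.sum_congr fun j _ => by rw [pow_succ]; ring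
    rw [this]
    rw [mul_comm c X, ← hc]
    ring
  obtain ⟨f₀, -, huniq⟩ := hX d
  have h1 : F = f₀ := huniq F ⟨hFdig, hFsum⟩
  have h2 : Finsupp.single 0 d = f₀ := by
    refine huniq _ ⟨?_, ?_⟩
    · intro j
      rcases eq_or_ne j 0 with rfl | hj
      · simpa [IsDigit] using hd
      · left; simp [Finsupp.single_apply, (Ne.symm hj)]
    · rw [Finsupp.sum_single_index (by simp)]; simp
  have := h1.trans h2.symm
  have h0 : F 0 = (Finsupp.single 0 d) 0 := by rw [this]
  rw [hF0, Finsupp.single_apply, if_pos rfl] at h0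
  exact h0.symm

/-- Every residue mod `X` is the residue of a digit. -/
theorem digit_surj (hX : IsSGenerator ι X) (z : R) :
    ∃ d : R, IsDigit ι d ∧
      Ideal.Quotient.mk (Ideal.span {X}) d = Ideal.Quotient.mk (Ideal.span {X}) z := by
  classical
  obtain ⟨f, ⟨hdig, hsum⟩, -⟩ := hX z
  refine ⟨f 0, hdig 0, ?_⟩
  rw [Ideal.Quotient.eq]
  have hsplit : (f.sum fun j a => a * X ^ j) =
      f 0 + ((f.erase 0).sum fun j a => a * X ^ j) := by
    conv_lhs => rw [← Finsupp.single_add_erase 0 f]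
    rw [Finsupp.sum_add_index' (fun j => by simp) (fun j b₁ b₂ => add_mul b₁ b₂ _),
      Finsupp.sum_single_index (by simp)]
    simp
  have hmem : ((f.erase 0).sum fun j a => a * X ^ j) ∈ Ideal.span {X} := by
    rw [Ideal.mem_span_singleton]
    refine Finset.dvd_sum fun j hj => ?_
    have hj0 : j ≠ 0 := by
      intro h; subst h; simpa using Finsupp.mem_support_iff.mp hj
    exact Dvd.dvd.mul_left (dvd_pow_self X hj0) _
  have : f 0 - z = -((f.erase 0).sum fun j a => a * X ^ j) := by
    rw [← hsum, hsplit]; ring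
  rw [this]
  exact neg_mem hmem

end Aux

/-- If some ring `R` admits an `𝕊[μₙ₊]`-generator (with `μₙ` of order `n`),
then `n + 1` is a prime power. -/
theorem sGenerator_card_add_one_isPrimePow {R : Type*} [CommRing R]
    {G : Type*} [CommGroup G] [Fintype G] [IsCyclic G] {n : ℕ}
    (hcard : Fintype.card G = n) (ι : G →* Rˣ) (hι : Function.Injective ι)
    (X : R) (hX : IsSGenerator ι X) :
    IsPrimePow (n + 1) := by
  classical
  rcases subsingleton_or_nontrivial R with hR | hR
  · -- trivial ring: `G` is trivial, so `n = 1` and `n + 1 = 2`.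
    have hsub : Subsingleton G := by
      constructor
      intro a b
      apply hι
      exact Subsingleton.elim _ _
    have : Fintype.card G = 1 := Fintype.card_eq_one_iff_nonempty_unique.mpr
      ⟨⟨⟨1⟩, fun a => Subsingleton.elim _ _⟩⟩
    rw [← hcard, this]
    exact ⟨2, 1, Nat.prime_two.prime, one_pos, by norm_num⟩
  · set I : Ideal R := Ideal.span {X} with hI
    set K := R ⧸ I
    set mk : R →+* K := Ideal.Quotient.mk I with hmk
    set φ : Option G → K := fun o => mk (o.elim 0 fun g => (ι g : R)) with hφ
    have hdigφ : ∀ o : Option G, IsDigit ι (o.elim 0 fun g => (ι g : R)) := by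
      rintro (_ | g)
      · exact Or.inl rfl
      · exact Or.inr ⟨g, rfl⟩
    have hbij : Function.Bijective φ := by
      constructor
      · intro o o' h
        have := digit_inj hX (hdigφ o) (hdigφ o') h
        match o, o', this with
        | none, none, _ => rfl
        | none, some g, h => exact absurd h.symm (Units.ne_zero _)
        | some g, none, h => exact absurd h (Units.ne_zero _)
        | some g, some g', h =>
            exact congrArg some (hι (Units.ext h))
      · intro z
        obtain ⟨z', rfl⟩ := Ideal.Quotient.mk_surjective z
        obtain ⟨d, hd, hdz⟩ := digit_surj hX z'
        rcases hd with rfl | ⟨g, rfl⟩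
        · exact ⟨none, hdz⟩
        · exact ⟨some g, hdz⟩
    haveI : Fintype K := Fintype.ofBijective φ hbij
    have hcardK : Fintype.card K = n + 1 := by
      rw [← Fintype.card_of_bijective hbij, Fintype.card_option, hcard]
    have hone : (1 : K) ≠ 0 := by
      intro h
      have h1 : mk (ι 1 : R) = mk 0 := by
        simpa using h
      have := digit_inj hX (Or.inr ⟨1, rfl⟩) (Or.inl rfl) h1
      exact Units.ne_zero (ι 1) this
    have hfield : IsField K := by
      refine ⟨⟨1, 0, hone⟩, mul_comm, ?_⟩
      intro a ha
      obtain ⟨o, rfl⟩ := hbij.surjective a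
      match o with
      | none => exact absurd (by simp [hφ]) ha
      | some g =>
          have : IsUnit (φ (some g)) := (ι g).isUnit.map mk
          obtain ⟨u, hu⟩ := this
          exact ⟨(u⁻¹ : Kˣ), by rw [← hu]; exact u.mul_inv⟩
    letI : Field K := hfield.toField
    obtain ⟨p, -, m, hp, hpm⟩ := FiniteField.card' (K := K)
    refine ⟨p, m, hp.prime, m.pos, ?_⟩
    rw [← hpm, hcardK]
end

section
/- For the ring ℤ with carry rule 1 + 1 = −1 + X + X², the integer 5 cannot be written as a finite sum Σ_j α_j X^j with all α_j ∈ {−1,0,1}: in the quotient ring ℤ[X]/(X^n, X² + X − 3) the element 5 is represented by −1 − X − X³ − X⁴ − ⋯ − X^{n−1}, a representation of degree n−1 for every n. -/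
open Polynomial

/-- The truncated rings `R_n = ℤ[X]/(X^n, X² + X - 3)` for the carry rule
`1 + 1 = -1 + X + X²`. -/
noncomputable def carryQuot (n : ℕ) : Ideal (Polynomial ℤ) :=
  Ideal.span {(X : Polynomial ℤ) ^ n, X ^ 2 + X - 3}

lemma part1_identity (m : ℕ) :
    (-(2 + X) : Polynomial ℤ) * X ^ (m + 3)
      + (2 + ∑ j ∈ Finset.Icc 1 (m + 2), X ^ j) * (X ^ 2 + X - 3)
      = -6 - X - ∑ j ∈ Finset.Icc 3 (m + 2), X ^ j := by
  induction m with
  | zero =>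
    rw [show Finset.Icc 1 2 = {1, 2} by rfl, show Finset.Icc 3 2 = ∅ by rfl]
    simp; ring
  | succ m ih =>
    have h1 : ∑ j ∈ Finset.Icc 1 (m + 1 + 2), (X : Polynomial ℤ) ^ j
        = (∑ j ∈ Finset.Icc 1 (m + 2), X ^ j) + X ^ (m + 3) := by
      rw [show m + 1 + 2 = (m + 2) + 1 by ring, Finset.sum_Icc_succ_top (by omega)]
    have h2 : ∑ j ∈ Finset.Icc 3 (m + 1 + 2), (X : Polynomial ℤ) ^ j
        = (∑ j ∈ Finset.Icc 3 (m + 2), X ^ j) + X ^ (m + 3) := by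
      rw [show m + 1 + 2 = (m + 2) + 1 by ring, Finset.sum_Icc_succ_top (by omega)]
    rw [h1, h2]
    linear_combination ih

lemma part1 (n : ℕ) : (Ideal.Quotient.mk (carryQuot n))
    (-1 - X - ∑ j ∈ Finset.Icc 3 (n - 1), X ^ j) = 5 := by
  rw [show (5 : Polynomial ℤ ⧸ carryQuot n) = Ideal.Quotient.mk _ 5 from
      (map_ofNat _ 5).symm, Ideal.Quotient.eq]
  show _ ∈ Ideal.span _
  rw [Ideal.mem_span_pair]
  match n with
  | 0 =>
    exact ⟨-6 - X, 0, by rw [show Finset.Icc 3 (0-1) = ∅ by rfl, Finset.sum_empty]; ring⟩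
  | 1 =>
    exact ⟨-2*X - 3, 2, by rw [show Finset.Icc 3 (1-1) = ∅ by rfl, Finset.sum_empty]; ring⟩
  | 2 =>
    exact ⟨-X - 3, 2 + X, by rw [show Finset.Icc 3 (2-1) = ∅ by rfl, Finset.sum_empty]; ring⟩
  | (m+3) =>
    refine ⟨-(2 + X), 2 + ∑ j ∈ Finset.Icc 1 (m + 2), X ^ j, ?_⟩
    rw [show m + 3 - 1 = m + 2 by omega]
    linear_combination part1_identity m

noncomputable abbrev qp : Polynomial ℤ := X ^ 2 + X - 3

lemma qp_monic : (qp).Monic := by unfold qp; monicity!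
lemma qp_deg : (qp).degree = 2 := by unfold qp; compute_degree!

lemma aeval_qp {x : ℝ} (hx : x ^ 2 + x - 3 = 0) : aeval x qp = 0 := by
  simp only [qp, map_sub, map_add, map_pow, aeval_X, map_ofNat]
  linarith

lemma aeval_mod {x : ℝ} (hx : x ^ 2 + x - 3 = 0) (p : Polynomial ℤ) :
    aeval x p = ((p %ₘ qp).coeff 0 : ℝ) + ((p %ₘ qp).coeff 1 : ℝ) * x := by
  have h1 : p %ₘ qp + qp * (p /ₘ qp) = p := modByMonic_add_div p qp
  have h2 : aeval x p = aeval x (p %ₘ qp) := by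
    conv_lhs => rw [← h1]
    rw [map_add, map_mul, aeval_qp hx, zero_mul, add_zero]
  have hdeg : (p %ₘ qp).degree ≤ 1 := by
    have := degree_modByMonic_lt p qp_monic
    rw [qp_deg] at this
    exact Order.le_of_lt_succ (by exact_mod_cast this)
  have h3 := Polynomial.eq_X_add_C_of_degree_le_one hdeg
  rw [h2]
  conv_lhs => rw [h3]
  simp only [map_add, map_mul, aeval_C, aeval_X]
  simp only [algebraMap_int_eq, eq_intCast]
  ring

lemma coeff_of_finsupp (α : ℕ →₀ ℤ) (k : ℕ) :
    (α.sum fun j a => C a * X ^ j).coeff k = α k := by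
  rw [Finsupp.sum, finset_sum_coeff]
  simp only [coeff_C_mul, coeff_X_pow, mul_ite, mul_one, mul_zero]
  simp only [eq_comm (a := k)]
  rw [Finset.sum_ite_eq' α.support k (fun j => α j)]
  by_cases h : k ∈ α.support
  · simp [h]
  · simp [h, Finsupp.notMem_support_iff.mp h]

lemma int_irrat {x : ℝ} (hx : Irrational x) {c e : ℤ}
    (h : (c : ℝ) + (e : ℝ) * x = 0) : c = 0 ∧ e = 0 := by
  by_cases he : e = 0
  · refine ⟨?_, he⟩
    subst he
    have : (c:ℝ) = 0 := by push_cast at h; linarith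
    exact_mod_cast this
  · exfalso
    apply hx
    refine ⟨(-c : ℚ) / (e : ℚ), ?_⟩
    have he' : (e : ℝ) ≠ 0 := Int.cast_ne_zero.mpr he
    push_cast
    field_simp
    linarith

lemma part2 : ¬ ∃ α : ℕ →₀ ℤ, (∀ j, α j = -1 ∨ α j = 0 ∨ α j = 1) ∧
      ∀ n : ℕ, (Ideal.Quotient.mk (carryQuot n))
        (α.sum fun j a => C a * X ^ j) = 5 := by
  rintro ⟨α, hdig, hall⟩
  set f : Polynomial ℤ := α.sum fun j a => C a * X ^ j with hf
  -- membership
  have hmem : ∀ n : ℕ, ∃ u v : Polynomial ℤ, u * X ^ n + v * qp = f - 5 := by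
    intro n
    have h := hall n
    rw [show (5 : Polynomial ℤ ⧸ carryQuot n) = Ideal.Quotient.mk _ 5 from
        (map_ofNat _ 5).symm, Ideal.Quotient.eq] at h
    exact Ideal.mem_span_pair.mp h
  -- real roots
  set s : ℝ := Real.sqrt 13 with hsdef
  have hs : s ^ 2 = 13 := Real.sq_sqrt (by norm_num)
  have hirr : Irrational s := by
    have := (by norm_num : (13:ℕ).Prime).irrational_sqrt
    convert this using 2; norm_num
  set β : ℝ := (-1 + s) / 2 with hβ
  set β' : ℝ := (-1 - s) / 2 with hβ'
  have hb : β ^ 2 + β - 3 = 0 := by rw [hβ]; linear_combination hs / 4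
  have hb' : β' ^ 2 + β' - 3 = 0 := by rw [hβ']; linear_combination hs / 4
  have hBB : β * β' = -3 := by rw [hβ, hβ']; linear_combination -hs / 4
  have hsum : β + β' = -1 := by rw [hβ, hβ']; ring
  set c : ℤ := ((f - 5) %ₘ qp).coeff 0 with hc
  set e : ℤ := ((f - 5) %ₘ qp).coeff 1 with he
  set N : ℤ := c ^ 2 - c * e - 3 * e ^ 2 with hN
  -- general norm identity
  have hnorm : ∀ a b : ℤ, ((a:ℝ) + b * β) * ((a:ℝ) + b * β')
      = ((a ^ 2 - a * b - 3 * b ^ 2 : ℤ) : ℝ) := by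
    intro a b
    push_cast
    linear_combination ((a:ℝ) * b) * hsum + ((b:ℝ)^2) * hBB
  have key : ∀ n : ℕ, ∃ k : ℤ, N = (-3) ^ n * k := by
    intro n
    obtain ⟨u, v, huv⟩ := hmem n
    set a : ℤ := (u %ₘ qp).coeff 0 with ha
    set b : ℤ := (u %ₘ qp).coeff 1 with hbdef
    refine ⟨a ^ 2 - a * b - 3 * b ^ 2, ?_⟩
    have E : ∀ x : ℝ, x ^ 2 + x - 3 = 0 →
        ((c:ℝ) + e * x) = x ^ n * ((a:ℝ) + b * x) := by
      intro x hx
      have h := congrArg (aeval x) huv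
      rw [map_add, map_mul, map_mul, aeval_qp hx, mul_zero, add_zero,
        map_pow, aeval_X, aeval_mod hx u, aeval_mod hx (f - 5)] at h
      rw [← ha, ← hbdef, ← hc, ← he] at h
      linear_combination -h
    have E1 := E β hb
    have E2 := E β' hb'
    have h3 : ((N : ℤ) : ℝ) = ((c:ℝ) + e * β) * ((c:ℝ) + e * β') := by
      rw [hnorm c e, hN]
    have h4 : ((c:ℝ) + e * β) * ((c:ℝ) + e * β')
        = β ^ n * β' ^ n * (((a:ℝ) + b * β) * ((a:ℝ) + b * β')) := by
      rw [E1, E2]; ring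
    have h5 : ((N : ℤ) : ℝ) = (((-3) ^ n * (a ^ 2 - a * b - 3 * b ^ 2) : ℤ) : ℝ) := by
      rw [h3, h4, ← mul_pow, hBB, hnorm a b]; push_cast; ring
    exact_mod_cast h5
  -- N = 0
  have hN0 : N = 0 := by
    by_contra hne
    obtain ⟨k, hk⟩ := key N.natAbs
    have hk0 : k ≠ 0 := by
      intro h0; rw [h0, mul_zero] at hk; exact hne hk
    have habs : |N| = 3 ^ N.natAbs * |k| := by
      conv_lhs => rw [hk]
      rw [abs_mul, abs_pow, show |(-3:ℤ)| = 3 by norm_num]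
    have h1 : (3:ℤ) ^ N.natAbs ≤ |N| := by
      rw [habs]
      nlinarith [Int.one_le_abs hk0, pow_pos (by norm_num : (0:ℤ) < 3) N.natAbs]
    have h2 : ((N.natAbs : ℤ)) < 3 ^ N.natAbs := by
      have := Nat.lt_pow_self (n := N.natAbs) (by norm_num : 1 < 3)
      exact_mod_cast this
    rw [Int.abs_eq_natAbs] at h1
    linarith
  -- conclude c = e = 0
  have hprod : ((c:ℝ) + e * β) * ((c:ℝ) + e * β') = 0 := by
    rw [hnorm c e, ← hN]; exact_mod_cast congrArg (Int.cast : ℤ → ℝ) hN0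
  have hce : c = 0 ∧ e = 0 := by
    rcases mul_eq_zero.mp hprod with h | h
    · have h' : ((2*c - e : ℤ) : ℝ) + ((e : ℤ) : ℝ) * s = 0 := by
        push_cast
        rw [hβ] at h
        linarith
      obtain ⟨h1, h2⟩ := int_irrat hirr h'
      constructor <;> omega
    · have h' : ((2*c - e : ℤ) : ℝ) + ((-e : ℤ) : ℝ) * s = 0 := by
        push_cast
        rw [hβ'] at h
        linarith
      obtain ⟨h1, h2⟩ := int_irrat hirr h'
      constructor <;> omega
  -- divisibility
  have hmod : (f - 5) %ₘ qp = 0 := by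
    have hdeg : ((f - 5) %ₘ qp).degree ≤ 1 := by
      have := degree_modByMonic_lt (f - 5) qp_monic
      rw [qp_deg] at this
      exact Order.le_of_lt_succ (by exact_mod_cast this)
    rw [Polynomial.eq_X_add_C_of_degree_le_one hdeg, ← hc, ← he, hce.1, hce.2]
    simp
  obtain ⟨g, hg⟩ := (modByMonic_eq_zero_iff_dvd qp_monic).mp hmod
  -- coefficient relations
  have hfc : ∀ k, f.coeff k = α k := coeff_of_finsupp α
  have hsplit : qp * g = X * (X * g) + X * g - 3 * g := by ring
  have hC0 : (qp * g).coeff 0 = -3 * g.coeff 0 := by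
    rw [hsplit]
    simp [mul_coeff_zero, coeff_X_zero]
  have hC1 : (qp * g).coeff 1 = g.coeff 0 - 3 * g.coeff 1 := by
    rw [hsplit]
    simp [coeff_X_mul, mul_coeff_zero, coeff_X_zero]
  have hCk : ∀ k, (qp * g).coeff (k + 2) =
      g.coeff k + g.coeff (k + 1) - 3 * g.coeff (k + 2) := by
    intro k
    rw [hsplit]
    rw [show k + 2 = (k + 1) + 1 from rfl]
    simp [coeff_X_mul]
  have hfive : ∀ k, (5 : Polynomial ℤ).coeff k = if k = 0 then 5 else 0 := by
    intro k
    rw [show (5 : Polynomial ℤ) = C 5 by norm_num, coeff_C]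
  have hgf : ∀ k, f.coeff k = (qp * g).coeff k + (5 : Polynomial ℤ).coeff k := by
    intro k
    have : f = qp * g + 5 := by rw [← hg]; ring
    rw [this, coeff_add]
  -- digits force g's coefficients
  have hg0 : g.coeff 0 = 2 := by
    have h := hgf 0
    rw [hfc 0, hC0, hfive 0] at h
    rcases hdig 0 with h' | h' | h' <;> omega
  have hg1 : g.coeff 1 = 1 := by
    have h := hgf 1
    rw [hfc 1, hC1, hfive 1] at h
    rcases hdig 1 with h' | h' | h' <;> omega
  have hrel : ∀ k, α (k + 2) = g.coeff k + g.coeff (k + 1) - 3 * g.coeff (k + 2) := by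
    intro k
    have h := hgf (k + 2)
    rw [hfc (k + 2), hCk k, hfive (k + 2)] at h
    simpa using h
  have hg2 : g.coeff 2 = 1 := by
    have h := hrel 0
    rw [show (0:ℕ) + 1 = 1 by omega, show (0:ℕ) + 2 = 2 by omega] at h
    rcases hdig 2 with h' | h' | h' <;> omega
  have main : ∀ k, g.coeff (k + 1) = 1 ∧ g.coeff (k + 2) = 1 := by
    intro k
    induction k with
    | zero => exact ⟨hg1, hg2⟩
    | succ k ih =>
      have h := hrel (k + 1)
      rw [show k + 1 + 1 = k + 2 by omega, show k + 1 + 2 = k + 3 by omega] at h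
      have h1 := ih.1
      have h2 := ih.2
      refine ⟨by rw [show k + 1 + 1 = k + 2 by omega]; exact ih.2, ?_⟩
      rw [show k + 1 + 2 = k + 3 by omega]
      rcases hdig (k + 3) with h' | h' | h' <;> omega
  obtain ⟨hcoe, -⟩ := main g.natDegree
  have := Polynomial.coeff_eq_zero_of_natDegree_lt (lt_add_one g.natDegree)
  omega

/-- With the carry rule `1 + 1 = -1 + X + X²`, in every truncation
`ℤ[X]/(X^n, X² + X - 3)` the element `5` is represented by
`-1 - X - X³ - X⁴ - ⋯ - X^{n-1}` (of degree `n-1`), and consequently `5`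
admits no finitely supported `{-1,0,1}`-digit representation compatible with
all truncations. -/
theorem five_not_representable_carry_rule :
    (∀ n : ℕ, (Ideal.Quotient.mk (carryQuot n))
        (-1 - X - ∑ j ∈ Finset.Icc 3 (n - 1), X ^ j) = 5) ∧
    ¬ ∃ α : ℕ →₀ ℤ, (∀ j, α j = -1 ∨ α j = 0 ∨ α j = 1) ∧
      ∀ n : ℕ, (Ideal.Quotient.mk (carryQuot n))
        (α.sum fun j a => C a * X ^ j) = 5 := by
  exact ⟨part1, part2⟩
end

section
/- Every Gaussian integer z ∈ ℤ[i] can be written uniquely as a finite sum z = Σ_j α_j·(−1+i)^j with digits α_j ∈ {0,1}. -/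
open Finset

private def gb : GaussianInt := -1 + Zsqrtd.sqrtd

private lemma gb_re : gb.re = -1 := rfl
private lemma gb_im : gb.im = 1 := rfl

private lemma gb_ne_zero : gb ≠ 0 := by
  intro h
  have := congrArg Zsqrtd.im h
  simp [gb_im] at this

private lemma add_gb_mul_re (a : ℤ) (t : GaussianInt) :
    ((a : GaussianInt) + gb * t).re = a - t.re - t.im := by
  simp [Zsqrtd.re_mul, gb_re, gb_im]; ring

private lemma add_gb_mul_im (a : ℤ) (t : GaussianInt) :
    ((a : GaussianInt) + gb * t).im = t.re - t.im := by
  simp [Zsqrtd.im_mul, gb_re, gb_im]; ring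

/-- division step -/
private def gw (z : GaussianInt) : GaussianInt :=
  ⟨(z.re + z.im) / 2 - z.re + (z.re + z.im) % 2, -((z.re + z.im) / 2)⟩

private lemma gb_mul_gw (z : GaussianInt) :
    gb * gw z = z - (((z.re + z.im) % 2 : ℤ) : GaussianInt) := by
  ext <;> simp [gw, Zsqrtd.re_mul, Zsqrtd.im_mul, gb_re, gb_im] <;> omega

private def gdigit : ℕ → GaussianInt → ℤ
  | 0, z => (z.re + z.im) % 2
  | (j+1), z => gdigit j (gw z)

private lemma gdigit_succ (j : ℕ) (z : GaussianInt) :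
    gdigit (j+1) z = gdigit j (gw z) := rfl

private lemma gw_zero : gw 0 = 0 := by
  ext <;> simp [gw]

private lemma gdigit_zero : ∀ j, gdigit j 0 = 0
  | 0 => by simp [gdigit]
  | (j+1) => by rw [gdigit_succ, gw_zero]; exact gdigit_zero j

private lemma parity_add_gb_mul (a : ℤ) (t : GaussianInt) (ha : a = 0 ∨ a = 1) :
    (((a : GaussianInt) + gb * t).re + ((a : GaussianInt) + gb * t).im) % 2 = a := by
  rw [add_gb_mul_re, add_gb_mul_im]
  omega

private lemma gw_add_gb_mul (a : ℤ) (t : GaussianInt) (ha : a = 0 ∨ a = 1) :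
    gw ((a : GaussianInt) + gb * t) = t := by
  apply mul_left_cancel₀ gb_ne_zero
  rw [gb_mul_gw, parity_add_gb_mul a t ha]
  ring

/-- key digit-extraction lemma -/
private lemma gdigit_sum : ∀ (j N : ℕ) (g : ℕ → ℤ), (∀ i, g i = 0 ∨ g i = 1) →
    gdigit j (∑ i ∈ range N, (g i : GaussianInt) * gb ^ i) =
      if j < N then g j else 0 := by
  intro j
  induction j with
  | zero =>
    intro N g hg
    cases N with
    | zero => simp [gdigit]
    | succ n =>
      rw [Finset.sum_range_succ']
      simp only [pow_succ, pow_zero, one_mul]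
      have h1 : ∑ i ∈ range n, (g (i+1) : GaussianInt) * (gb ^ i * gb) =
          gb * ∑ i ∈ range n, (g (i+1) : GaussianInt) * gb ^ i := by
        rw [Finset.mul_sum]; congr 1; funext i; ring
      rw [h1, mul_one, add_comm _ ((g 0 : ℤ) : GaussianInt)]
      have := parity_add_gb_mul (g 0) (∑ i ∈ range n, (g (i+1) : GaussianInt) * gb ^ i) (hg 0)
      simpa [gdigit] using this
  | succ j ih =>
    intro N g hg
    cases N with
    | zero => simp [gdigit, gw_zero, gdigit_zero]
    | succ n =>
      rw [Finset.sum_range_succ']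
      simp only [pow_succ, pow_zero, one_mul]
      have h1 : ∑ i ∈ range n, (g (i+1) : GaussianInt) * (gb ^ i * gb) =
          gb * ∑ i ∈ range n, (g (i+1) : GaussianInt) * gb ^ i := by
        rw [Finset.mul_sum]; congr 1; funext i; ring
      rw [h1, mul_one, add_comm _ ((g 0 : ℤ) : GaussianInt)]
      have h2 : gw ((g 0 : GaussianInt) + gb * ∑ i ∈ range n, (g (i+1) : GaussianInt) * gb ^ i)
          = ∑ i ∈ range n, (g (i+1) : GaussianInt) * gb ^ i :=
        gw_add_gb_mul (g 0) _ (hg 0)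
      rw [gdigit_succ, h2, ih n (fun i => g (i+1)) (fun i => hg (i+1))]
      simp [Nat.succ_lt_succ_iff]

/-- list-based representation -/
private def ofDigits : List ℤ → GaussianInt
  | [] => 0
  | a :: t => (a : GaussianInt) + gb * ofDigits t

private lemma sum_range_getD (l : List ℤ) :
    ∑ i ∈ range l.length, ((l.getD i 0 : ℤ) : GaussianInt) * gb ^ i = ofDigits l := by
  induction l with
  | nil => simp [ofDigits]
  | cons a t ih =>
    rw [List.length_cons, Finset.sum_range_succ']
    simp only [List.getD_cons_succ, List.getD_cons_zero, pow_succ, pow_zero]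
    have h1 : ∑ i ∈ range t.length, ((t.getD i 0 : ℤ) : GaussianInt) * (gb ^ i * gb) =
        gb * ∑ i ∈ range t.length, ((t.getD i 0 : ℤ) : GaussianInt) * gb ^ i := by
      rw [Finset.mul_sum]; congr 1; funext i; ring
    rw [h1, ih, ofDigits, mul_one, add_comm]

private lemma exists_digit_list : ∀ (n : ℕ) (z : GaussianInt), z.norm.natAbs ≤ n →
    ∃ l : List ℤ, (∀ a ∈ l, a = 0 ∨ a = 1) ∧ ofDigits l = z := by
  intro n
  induction n with
  | zero =>
    intro z hz
    have h0 : z.norm = 0 := by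
      have := Zsqrtd.norm_nonneg (by norm_num : (-1 : ℤ) ≤ 0) z
      omega
    have : z = 0 := (Zsqrtd.norm_eq_zero_iff (by norm_num) z).mp h0
    exact ⟨[], by simp, by simp [this, ofDigits]⟩
  | succ n ih =>
    intro z hz
    by_cases h0 : z = 0
    · exact ⟨[], by simp, by simp [h0, ofDigits]⟩
    by_cases hb1 : z = ⟨-1, 0⟩
    · exact ⟨[1,0,1,1,1], by simp, by
        rw [hb1]; simp [ofDigits, gb, Zsqrtd.ext_iff, Zsqrtd.re_mul, Zsqrtd.im_mul]⟩
    by_cases hb2 : z = ⟨0, 1⟩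
    · exact ⟨[1,1], by simp, by
        rw [hb2]; simp [ofDigits, gb, Zsqrtd.ext_iff, Zsqrtd.re_mul, Zsqrtd.im_mul]⟩
    by_cases hb3 : z = ⟨0, -1⟩
    · exact ⟨[1,1,1], by simp, by
        rw [hb3]; simp [ofDigits, gb, Zsqrtd.ext_iff, Zsqrtd.re_mul, Zsqrtd.im_mul]⟩
    by_cases hb4 : z = ⟨-2, 1⟩
    · exact ⟨[1,1,1,1,1], by simp, by
        rw [hb4]; simp [ofDigits, gb, Zsqrtd.ext_iff, Zsqrtd.re_mul, Zsqrtd.im_mul]⟩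
    by_cases hb5 : z = ⟨-2, -1⟩
    · exact ⟨[1,1,0,1,0,1,1,1], by simp, by
        rw [hb5]; simp [ofDigits, gb, Zsqrtd.ext_iff, Zsqrtd.re_mul, Zsqrtd.im_mul]⟩
    -- main step
    set p : ℤ := (z.re + z.im) % 2 with hp
    have hp01 : p = 0 ∨ p = 1 := by omega
    set w := gw z with hw
    have hzw : z = (p : GaussianInt) + gb * w := by
      rw [hw, gb_mul_gw, ← hp]; ring
    have hnormz : 0 < z.norm := by
      have h1 := Zsqrtd.norm_nonneg (by norm_num : (-1 : ℤ) ≤ 0) z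
      have h2 : z.norm ≠ 0 := fun h => h0 ((Zsqrtd.norm_eq_zero_iff (by norm_num) z).mp h)
      omega
    have hlt : w.norm < z.norm := by
      have hmul : (gb * w).norm = 2 * w.norm := by
        rw [Zsqrtd.norm_mul]
        norm_num [Zsqrtd.norm_def, gb_re, gb_im]
      have hsub : (gb * w).norm = (z.re - p) * (z.re - p) + z.im * z.im := by
        have heq : gb * w = z - ((p : ℤ) : GaussianInt) := by rw [hzw]; ring
        rw [heq, Zsqrtd.norm_def]
        simp only [Zsqrtd.re_sub, Zsqrtd.im_sub, Zsqrtd.re_intCast, Zsqrtd.im_intCast]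
        ring
      have hz2 : z.norm = z.re * z.re + z.im * z.im := by
        rw [Zsqrtd.norm_def]; ring
      rcases hp01 with hp0 | hp1
      · rw [hp0] at hsub; nlinarith [hmul, hsub, hz2, hnormz]
      · have hkey : 2 < (z.re + 1) * (z.re + 1) + z.im * z.im := by
          by_contra hcon
          push_neg at hcon
          have hr1 : -2 ≤ z.re := by nlinarith
          have hr2 : z.re ≤ 0 := by nlinarith
          have hi1 : -1 ≤ z.im := by nlinarith
          have hi2 : z.im ≤ 1 := by nlinarith
          have hodd : (z.re + z.im) % 2 = 1 := by rw [← hp, hp1]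
          have e0 : ¬(z.re = 0 ∧ z.im = 0) := fun h => h0 (Zsqrtd.ext_iff.mpr h)
          have e1 : ¬(z.re = -1 ∧ z.im = 0) := fun h => hb1 (Zsqrtd.ext_iff.mpr h)
          have e2 : ¬(z.re = 0 ∧ z.im = 1) := fun h => hb2 (Zsqrtd.ext_iff.mpr h)
          have e3 : ¬(z.re = 0 ∧ z.im = -1) := fun h => hb3 (Zsqrtd.ext_iff.mpr h)
          have e4 : ¬(z.re = -2 ∧ z.im = 1) := fun h => hb4 (Zsqrtd.ext_iff.mpr h)
          have e5 : ¬(z.re = -2 ∧ z.im = -1) := fun h => hb5 (Zsqrtd.ext_iff.mpr h)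
          interval_cases z.re <;> interval_cases z.im <;> omega
        rw [hp1] at hsub
        nlinarith [hmul, hsub, hz2]
    have hwnat : w.norm.natAbs ≤ n := by
      have h1 := Zsqrtd.norm_nonneg (by norm_num : (-1 : ℤ) ≤ 0) w
      omega
    obtain ⟨l, hl, hls⟩ := ih w hwnat
    refine ⟨p :: l, ?_, ?_⟩
    · intro a ha
      rcases List.mem_cons.mp ha with h | h
      · subst h; exact hp01
      · exact hl a h
    · rw [ofDigits, hls, ← hzw]

/-- Every Gaussian integer is uniquely a finite sum `Σ_j α_j (-1+i)^j`
with digits `α_j ∈ {0,1}`. -/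
theorem gaussianInt_unique_representation (z : GaussianInt) :
    ∃! α : ℕ →₀ ℤ, (∀ j, α j = 0 ∨ α j = 1) ∧
      (α.sum fun j a => (a : GaussianInt) * (-1 + Zsqrtd.sqrtd) ^ j) = z := by
  have hbeq : (-1 + Zsqrtd.sqrtd : GaussianInt) = gb := rfl
  have hsum : ∀ (α : ℕ →₀ ℤ) (N : ℕ), (∀ j ∈ α.support, j < N) →
      (α.sum fun j a => (a : GaussianInt) * gb ^ j) =
        ∑ i ∈ range N, ((α i : ℤ) : GaussianInt) * gb ^ i := by
    intro α N hN
    apply Finsupp.sum_of_support_subset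
    · intro j hj
      exact Finset.mem_range.mpr (hN j hj)
    · intro i _
      simp
  have hdet : ∀ (α : ℕ →₀ ℤ), (∀ j, α j = 0 ∨ α j = 1) →
      ∀ j, gdigit j (α.sum fun j a => (a : GaussianInt) * gb ^ j) = α j := by
    intro α hα j
    set N := max (j + 1) ((α.support.sup id) + 1) with hN
    have hsupp : ∀ i ∈ α.support, i < N := by
      intro i hi
      have := Finset.le_sup (f := id) hi
      simp only [id] at this
      omega
    rw [hsum α N hsupp, gdigit_sum j N (fun i => α i) (fun i => hα i)]
    have : j < N := lt_of_lt_of_le (Nat.lt_succ_self j) (le_max_left _ _)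
    simp [this]
  -- existence
  have hex : ∃ α : ℕ →₀ ℤ, (∀ j, α j = 0 ∨ α j = 1) ∧
      (α.sum fun j a => (a : GaussianInt) * (-1 + Zsqrtd.sqrtd) ^ j) = z := by
    obtain ⟨l, hl, hls⟩ := exists_digit_list z.norm.natAbs z le_rfl
    refine ⟨Finsupp.onFinset (range l.length) (fun j => l.getD j 0) ?_, ?_, ?_⟩
    · intro j hj
      rw [Finset.mem_range]
      by_contra hc
      exact hj (List.getD_eq_default _ _ (by omega))
    · intro j
      by_cases hj : j < l.length
      · rw [Finsupp.onFinset_apply, List.getD_eq_getElem _ _ hj]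
        exact hl _ (List.getElem_mem hj)
      · rw [Finsupp.onFinset_apply, List.getD_eq_default _ _ (by omega)]
        left; rfl
    · rw [hbeq]
      rw [hsum _ l.length (fun j hj => Finset.mem_range.mp
        (Finsupp.support_onFinset_subset hj))]
      simp only [Finsupp.onFinset_apply]
      rw [← hls]
      exact sum_range_getD l
  obtain ⟨α, hαd, hαs⟩ := hex
  refine ⟨α, ⟨hαd, hαs⟩, ?_⟩
  intro α' ⟨hd', hs'⟩
  ext j
  have h1 := hdet α' hd' j
  have h2 := hdet α hαd j
  rw [← hbeq] at h1 h2
  rw [hs'] at h1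
  rw [hαs] at h2
  rw [← h1, ← h2]
end

section
/- For X = −1+i in ℤ[i] and k ≥ 1, the quotient ℤ[i]/(X^{2k}) is isomorphic as a ring to (ℤ/2^kℤ)[X]/(X² + 2X + 2), and ℤ[i]/(X^{2k+1}) has additive group ℤ/2^{k+1}ℤ ⊕ (ℤ/2^kℤ)·X. -/
open Polynomial
set_option synthInstance.maxHeartbeats 1000000
set_option maxHeartbeats 1000000

section Part1
variable (k : ℕ)

noncomputable abbrev w : GaussianInt := -1 + Zsqrtd.sqrtd

lemma w_sq : (w)^2 = 2 * (-Zsqrtd.sqrtd) := by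
  ext <;> simp [w, pow_two, Zsqrtd.ext_iff]

lemma w_rel : (w)^2 + 2 * w + 2 = 0 := by
  ext <;> simp [w, pow_two, Zsqrtd.ext_iff]

lemma negI_unit : IsUnit (-Zsqrtd.sqrtd : GaussianInt) := by
  refine IsUnit.of_mul_eq_one (Zsqrtd.sqrtd) ?_
  ext <;> simp

lemma assoc1 : Associated ((2:GaussianInt)^k) ((w)^(2*k)) := by
  have : (w)^(2*k) = 2^k * (-Zsqrtd.sqrtd)^k := by
    rw [pow_mul, w_sq, mul_pow]
  rw [this]
  exact ⟨(negI_unit.unit)^k, by simp⟩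

lemma mem_I (x : GaussianInt) :
    x ∈ Ideal.span {(w)^(2*k)} ↔ ((2^k : ℤ) : GaussianInt) ∣ x := by
  rw [Ideal.mem_span_singleton]
  constructor
  · intro h
    have := (assoc1 k).dvd.trans h
    simpa using this
  · intro h
    exact ((assoc1 k).symm.dvd.trans (by simpa using h))

instance charA : CharP (GaussianInt ⧸ Ideal.span {(w)^(2*k)}) (2^k) := by
  constructor
  intro m
  rw [show ((m : GaussianInt ⧸ Ideal.span {(w)^(2*k)})) = Ideal.Quotient.mk _ (m : GaussianInt) by push_cast; rfl]
  rw [Ideal.Quotient.eq_zero_iff_mem, mem_I]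
  rw [show ((m : GaussianInt)) = ((m:ℤ) : GaussianInt) by push_cast; rfl]
  rw [Zsqrtd.intCast_dvd_intCast]
  exact_mod_cast Iff.rfl



noncomputable section

abbrev A (k : ℕ) := GaussianInt ⧸ Ideal.span {(w)^(2*k)}
abbrev p (k : ℕ) : Polynomial (ZMod (2^k)) := X^2 + 2*X + 2

set_option synthInstance.maxHeartbeats 400000 in
def f (k : ℕ) : AdjoinRoot (p k) →+* A k :=
  AdjoinRoot.lift (ZMod.castHom dvd_rfl (A k)) (Ideal.Quotient.mk _ w) (by
    have h0 := congrArg (Ideal.Quotient.mk (Ideal.span {(w)^(2*k)})) w_rel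
    simp only [map_add, map_mul, map_pow, map_ofNat, map_zero] at h0
    simpa [p, eval₂_add, eval₂_mul, eval₂_pow] using h0)

lemma root_sq (k : ℕ) : (AdjoinRoot.root (p k))^2 + 2 * AdjoinRoot.root (p k) + 2 = 0 := by
  have := AdjoinRoot.eval₂_root (p k)
  simpa [p, eval₂_add, eval₂_mul, eval₂_pow] using this

def g0 (k : ℕ) : GaussianInt →+* AdjoinRoot (p k) :=
  Zsqrtd.lift ⟨AdjoinRoot.root (p k) + 1, by
    have := root_sq k
    push_cast
    linear_combination this⟩

lemma g0_w (k : ℕ) : g0 k w = AdjoinRoot.root (p k) := by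
  simp [g0, w, Zsqrtd.lift]

lemma g0_wpow (k : ℕ) : g0 k ((w)^(2*k)) = 0 := by
  rw [map_pow, g0_w, pow_mul]
  have h2 : (AdjoinRoot.root (p k))^2 = (-2) * (AdjoinRoot.root (p k) + 1) := by
    linear_combination root_sq k
  rw [h2, mul_pow]
  have : ((-2 : AdjoinRoot (p k)))^k = 0 := by
    have : ((2:ZMod (2^k)))^k = 0 := by
      have := ZMod.natCast_self (2^k)
      push_cast at this ⊢
      exact this
    have h3 := congrArg (algebraMap (ZMod (2^k)) (AdjoinRoot (p k))) this
    rw [map_pow, map_zero] at h3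
    rw [neg_pow]
    simp only [map_ofNat] at h3
    rw [h3, mul_zero]
  rw [this, zero_mul]

def g (k : ℕ) : A k →+* AdjoinRoot (p k) :=
  Ideal.Quotient.lift _ (g0 k) (by
    intro a ha
    rw [Ideal.mem_span_singleton] at ha
    obtain ⟨c, rfl⟩ := ha
    rw [map_mul, g0_wpow, zero_mul])


lemma f_root (k : ℕ) : f k (AdjoinRoot.root (p k)) = Ideal.Quotient.mk _ w := by
  unfold f; exact AdjoinRoot.lift_root _

lemma gf (k : ℕ) : (g k).comp (f k) = RingHom.id _ := by
  apply Ideal.Quotient.ringHom_ext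
  apply Polynomial.ringHom_ext
  · intro a
    exact RingHom.congr_fun (RingHom.ext_zmod (((g k).comp (f k)).comp ((AdjoinRoot.mk (p k)).comp C) : ZMod (2^k) →+* AdjoinRoot (p k)) ((RingHom.id _).comp ((AdjoinRoot.mk (p k)).comp C))) a
  · show (g k) (f k (AdjoinRoot.root (p k))) = AdjoinRoot.root (p k)
    rw [f_root]
    show g0 k w = _
    exact g0_w k

lemma fg (k : ℕ) : (f k).comp (g k) = RingHom.id _ := by
  apply Ideal.Quotient.ringHom_ext
  apply Zsqrtd.hom_ext
  show f k (g0 k Zsqrtd.sqrtd) = Ideal.Quotient.mk _ Zsqrtd.sqrtd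
  have h1 : g0 k Zsqrtd.sqrtd = AdjoinRoot.root (p k) + 1 := by
    simp [g0, Zsqrtd.lift]
  rw [h1, map_add, map_one, f_root]
  simp only [w, map_add, map_neg, map_one]
  ring

def e1 (k : ℕ) : A k ≃+* AdjoinRoot (p k) :=
  RingEquiv.ofRingHom (g k) (f k) (gf k) (fg k)

-- Part 2

def φ0 (k : ℕ) : GaussianInt →+ (ZMod (2^(k+1)) × ZMod (2^k)) where
  toFun z := (((z.re - z.im : ℤ) : ZMod (2^(k+1))), ((z.im : ℤ) : ZMod (2^k)))
  map_zero' := by simp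
  map_add' a b := by
    simp only [Zsqrtd.re_add, Zsqrtd.im_add, Prod.ext_iff, Prod.fst_add, Prod.snd_add]
    constructor <;> push_cast <;> ring

lemma assoc2 (k : ℕ) : Associated ((2:GaussianInt)^k * w) ((w)^(2*k+1)) := by
  have : (w)^(2*k+1) = (2^k * w) * (-Zsqrtd.sqrtd)^k := by
    rw [pow_succ, pow_mul, w_sq, mul_pow]; ring
  rw [this]
  exact ⟨(negI_unit.unit)^k, by simp⟩

lemma two_pow_cast (k : ℕ) : ((2:GaussianInt)^k) = ((2^k : ℤ) : GaussianInt) := by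
  push_cast; rfl

lemma two_pow_re (k : ℕ) : ((2:GaussianInt)^k).re = 2^k := by
  rw [two_pow_cast]; exact Zsqrtd.re_intCast _

lemma two_pow_im (k : ℕ) : ((2:GaussianInt)^k).im = 0 := by
  rw [two_pow_cast]; exact Zsqrtd.im_intCast _

lemma dvd_iff (k : ℕ) (z : GaussianInt) :
    (((2^k : ℤ) : GaussianInt) * w) ∣ z ↔ ((2^(k+1) : ℤ) ∣ z.re - z.im ∧ (2^k : ℤ) ∣ z.im) := by
  constructor
  · rintro ⟨c, rfl⟩
    have hre : ((((2^k : ℤ) : GaussianInt)) * w * c).re = 2^k * (-c.re - c.im) := by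
      simp [w, Zsqrtd.ext_iff, Zsqrtd.re_mul, Zsqrtd.im_mul, Zsqrtd.re_intCast, Zsqrtd.im_intCast, two_pow_re, two_pow_im]
      ring
    have him : ((((2^k : ℤ) : GaussianInt)) * w * c).im = 2^k * (c.re - c.im) := by
      simp [w, Zsqrtd.ext_iff, Zsqrtd.re_mul, Zsqrtd.im_mul, Zsqrtd.re_intCast, Zsqrtd.im_intCast, two_pow_re, two_pow_im]
      ring
    rw [hre, him]
    constructor
    · exact ⟨-c.re, by ring⟩
    · exact ⟨c.re - c.im, by ring⟩
  · rintro ⟨⟨m, hm⟩, ⟨t, ht⟩⟩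
    refine ⟨⟨-m, -(t+m)⟩, ?_⟩
    ext
    · show z.re = _
      simp [w, Zsqrtd.re_mul, Zsqrtd.im_mul, Zsqrtd.re_intCast, Zsqrtd.im_intCast, two_pow_re, two_pow_im]
      rw [show z.re = z.im + 2^(k+1) * m by linarith, ht]
      ring
    · show z.im = _
      simp [w, Zsqrtd.re_mul, Zsqrtd.im_mul, Zsqrtd.re_intCast, Zsqrtd.im_intCast, two_pow_re, two_pow_im]
      rw [ht]; ring

lemma ker_φ0 (k : ℕ) (z : GaussianInt) :
    φ0 k z = 0 ↔ z ∈ Ideal.span {(w)^(2*k+1)} := by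
  rw [Ideal.mem_span_singleton]
  rw [show ((w)^(2*k+1) ∣ z) ↔ ((2:GaussianInt)^k * w) ∣ z from
    ⟨fun h => (assoc2 k).dvd.trans h, fun h => (assoc2 k).symm.dvd.trans h⟩]
  rw [two_pow_cast]
  rw [dvd_iff]
  simp only [φ0, AddMonoidHom.coe_mk, ZeroHom.coe_mk, Prod.ext_iff, Prod.fst_zero, Prod.snd_zero]
  rw [ZMod.intCast_zmod_eq_zero_iff_dvd, ZMod.intCast_zmod_eq_zero_iff_dvd]
  push_cast
  rfl

abbrev I2 (k : ℕ) : Ideal GaussianInt := Ideal.span {(w)^(2*k+1)}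

def ψ (k : ℕ) : (GaussianInt ⧸ (I2 k).restrictScalars ℤ) →ₗ[ℤ] (ZMod (2^(k+1)) × ZMod (2^k)) :=
  Submodule.liftQ _ (φ0 k).toIntLinearMap (by
    intro x hx
    exact AddMonoidHom.mem_ker.mpr (by simpa using (ker_φ0 k x).mpr hx))

lemma ψ_bij (k : ℕ) : Function.Bijective (ψ k) := by
  constructor
  · rw [← LinearMap.ker_eq_bot, Submodule.eq_bot_iff]
    intro x hx
    obtain ⟨a, rfl⟩ := Submodule.Quotient.mk_surjective _ x
    have : φ0 k a = 0 := hx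
    rw [ker_φ0] at this
    simpa [Submodule.Quotient.mk_eq_zero] using this
  · intro c
    obtain ⟨m, hm⟩ := ZMod.intCast_surjective (n := 2^(k+1)) c.1
    obtain ⟨t, ht⟩ := ZMod.intCast_surjective (n := 2^k) c.2
    refine ⟨Submodule.Quotient.mk ⟨m + t, t⟩, ?_⟩
    show φ0 k ⟨m + t, t⟩ = c
    simp only [φ0, AddMonoidHom.coe_mk, ZeroHom.coe_mk]
    rw [Prod.ext_iff]
    constructor
    · show (((m + t) - t : ℤ) : ZMod (2^(k+1))) = c.1
      rw [← hm]; push_cast; ring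
    · exact ht

def e2 (k : ℕ) : (GaussianInt ⧸ I2 k) ≃+ (ZMod (2^(k+1)) × ZMod (2^k)) :=
  ((Submodule.Quotient.restrictScalarsEquiv ℤ (I2 k)).symm.toAddEquiv).trans
    (LinearEquiv.ofBijective (ψ k) (ψ_bij k)).toAddEquiv

/-- For `X = -1+i` in `ℤ[i]` and `k ≥ 1`: `ℤ[i]/(X^{2k})` is ring-isomorphic to
`(ℤ/2^kℤ)[X]/(X² + 2X + 2)`, and `ℤ[i]/(X^{2k+1})` is, as an additive group,
`ℤ/2^{k+1}ℤ ⊕ ℤ/2^kℤ`. -/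
theorem gaussianInt_quotient_structure (k : ℕ) (hk : 1 ≤ k) :
    Nonempty ((GaussianInt ⧸ Ideal.span {((-1 + Zsqrtd.sqrtd) ^ (2 * k) : GaussianInt)}) ≃+*
        AdjoinRoot ((X : Polynomial (ZMod (2 ^ k))) ^ 2 + 2 * X + 2)) ∧
    Nonempty ((GaussianInt ⧸ Ideal.span {((-1 + Zsqrtd.sqrtd) ^ (2 * k + 1) : GaussianInt)}) ≃+
        (ZMod (2 ^ (k + 1)) × ZMod (2 ^ k))) := by
  exact ⟨⟨e1 k⟩, ⟨e2 k⟩⟩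
end
end Part1
end

section
/- The evaluation map from finitely supported {−1,0,1}-sequences to ℂ given by (α_j) ↦ Σ_j α_j z^j, where z = (1+√−11)/2, is injective. -/
open Polynomial Complex
noncomputable def zz : ℂ := (1 + Complex.I * Real.sqrt 11) / 2
lemma zz_im : zz.im = Real.sqrt 11 / 2 := by simp [zz]
lemma zz_re : zz.re = 1 / 2 := by simp [zz]
lemma zz_sq : zz ^ 2 - zz + 3 = 0 := by
  have hs : ((Real.sqrt 11 : ℝ) : ℂ)^2 = 11 := by
    rw [← Complex.ofReal_pow, Real.sq_sqrt (by norm_num)]; norm_num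
  simp only [zz]
  linear_combination (((Real.sqrt 11:ℝ):ℂ)^2/4) * Complex.I_sq - (1/4)*hs
lemma zz_ne : zz ≠ 0 := by
  intro h
  have h2 := congrArg Complex.im h
  rw [zz_im] at h2
  simp at h2
lemma mm_monic : (X^2 - X + C 3 : ℤ[X]).Monic := by monicity!
lemma mm_aeval : aeval zz (X^2 - X + C 3 : ℤ[X]) = 0 := by
  simp only [map_add, map_sub, map_pow, aeval_X, aeval_C]
  rw [eq_intCast]
  push_cast
  linear_combination zz_sq
lemma mm_deg : (X^2 - X + C 3 : ℤ[X]).degree = 2 := by compute_degree!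

lemma lin_zero (a b : ℤ) (h : (a : ℂ) + (b : ℂ) * zz = 0) : a = 0 ∧ b = 0 := by
  have him := congrArg Complex.im h
  have hre := congrArg Complex.re h
  simp [zz_im, zz_re, Complex.add_im, Complex.mul_im, Complex.mul_re, Complex.add_re] at him hre
  subst him
  simp at hre
  exact ⟨by exact_mod_cast hre, rfl⟩

lemma three_dvd_coeff_zero (P : ℤ[X]) (hP : aeval zz P = 0) : 3 ∣ P.coeff 0 := by
  have h1 := Polynomial.modByMonic_add_div P (X^2 - X + C 3)
  have h2 : aeval zz (P %ₘ (X^2 - X + C 3)) +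
      aeval zz (X^2 - X + C 3 : ℤ[X]) * aeval zz (P /ₘ (X^2 - X + C 3)) = aeval zz P := by
    rw [← map_mul, ← map_add, h1]
  rw [mm_aeval, zero_mul, add_zero, hP] at h2
  have hrem : P %ₘ (X^2 - X + C 3) = 0 := by
    by_cases hr0 : P %ₘ (X^2 - X + C 3) = 0
    · exact hr0
    · exfalso
      have hdlt := Polynomial.degree_modByMonic_lt P mm_monic
      rw [mm_deg] at hdlt
      have hnd : (P %ₘ (X^2 - X + C 3)).natDegree ≤ 1 := by
        have h4 : (P %ₘ (X^2 - X + C 3)).natDegree < 2 :=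
          (Polynomial.natDegree_lt_iff_degree_lt hr0).mpr (by exact_mod_cast hdlt)
        omega
      have heq := Polynomial.eq_X_add_C_of_natDegree_le_one hnd
      set r := P %ₘ (X^2 - X + C 3) with hrdef
      have h3 : (r.coeff 0 : ℂ) + (r.coeff 1 : ℂ) * zz = 0 := by
        have := congrArg (aeval zz) heq
        rw [h2] at this
        simp only [map_add, map_mul, aeval_X, aeval_C, eq_intCast, map_intCast] at this
        linear_combination -this
      obtain ⟨h0, h1'⟩ := lin_zero _ _ h3
      apply hr0
      rw [heq, h0, h1']
      simp
  obtain ⟨q, hq⟩ := (Polynomial.modByMonic_eq_zero_iff_dvd mm_monic).mp hrem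
  have : P.coeff 0 = 3 * q.coeff 0 := by
    rw [hq, Polynomial.mul_coeff_zero]
    norm_num
  exact ⟨q.coeff 0, this⟩

lemma poly_key : ∀ n (P : ℤ[X]), P.natDegree ≤ n → (∀ j, |P.coeff j| ≤ 2) →
    aeval zz P = 0 → P = 0 := by
  intro n
  induction n with
  | zero =>
    intro P hd hb h0
    have hc : P.coeff 0 = 0 := by
      have h1 := three_dvd_coeff_zero P h0
      have h2 := abs_le.mp (hb 0)
      omega
    rw [Polynomial.eq_C_of_natDegree_le_zero hd, hc, map_zero]
  | succ n ih =>
    intro P hd hb h0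
    have hc : P.coeff 0 = 0 := by
      have h1 := three_dvd_coeff_zero P h0
      have h2 := abs_le.mp (hb 0)
      omega
    have hX : P = X * P.divX := by
      conv_lhs => rw [← Polynomial.X_mul_divX_add P]
      rw [hc, map_zero, add_zero]
    have hdx : aeval zz P.divX = 0 := by
      have h3 := congrArg (aeval zz) hX
      rw [h0, map_mul, aeval_X] at h3
      rcases mul_eq_zero.mp h3.symm with h | h
      · exact absurd h zz_ne
      · exact h
    have hbx : ∀ j, |P.divX.coeff j| ≤ 2 := fun j => by
      rw [Polynomial.coeff_divX]; exact hb _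
    have hdd : P.divX.natDegree ≤ n := by
      have := Polynomial.natDegree_divX_eq_natDegree_tsub_one (p := P)
      omega
    rw [hX, ih P.divX hdd hbx hdx, mul_zero]

/-- The evaluation at `z = (1+√-11)/2 ∈ ℂ` of finitely supported
`{-1,0,1}`-digit sequences, `(α_j) ↦ Σ_j α_j z^j`, is injective. -/
theorem eval_at_half_one_add_sqrt_neg_eleven_injective
    (α β : ℕ →₀ ℤ)
    (hα : ∀ j, α j = -1 ∨ α j = 0 ∨ α j = 1)
    (hβ : ∀ j, β j = -1 ∨ β j = 0 ∨ β j = 1)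
    (h : (α.sum fun j a => (a : ℂ) * ((1 + Complex.I * Real.sqrt 11) / 2) ^ j) =
         (β.sum fun j a => (a : ℂ) * ((1 + Complex.I * Real.sqrt 11) / 2) ^ j)) :
    α = β := by
  have hz : ((1 + Complex.I * Real.sqrt 11) / 2 : ℂ) = zz := rfl
  rw [hz] at h
  have hsum : ((α - β).sum fun j a => (a : ℂ) * zz ^ j) = 0 := by
    rw [Finsupp.sum_sub_index (by intro a b₁ b₂; push_cast; ring), h, sub_self]
  set γ : ℕ →₀ ℤ := α - β with hγ
  have haev : aeval zz (⟨AddMonoidAlgebra.ofCoeff γ⟩ : ℤ[X]) = 0 := by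
    rw [Polynomial.aeval_def, Polynomial.eval₂_eq_sum, Polynomial.sum_def]
    rw [Polynomial.support_ofFinsupp, AddMonoidAlgebra.coeff_ofCoeff]
    rw [← hsum, Finsupp.sum]
    apply Finset.sum_congr rfl
    intro j _
    rw [Polynomial.coeff_ofFinsupp, AddMonoidAlgebra.coeff_ofCoeff, eq_intCast]
  have hbnd : ∀ j, |(⟨AddMonoidAlgebra.ofCoeff γ⟩ : ℤ[X]).coeff j| ≤ 2 := by
    intro j
    rw [Polynomial.coeff_ofFinsupp, AddMonoidAlgebra.coeff_ofCoeff]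
    have h1 := hα j
    have h2 := hβ j
    have : γ j = α j - β j := by rw [hγ]; simp
    rw [this, abs_le]
    omega
  have hP0 : (⟨AddMonoidAlgebra.ofCoeff γ⟩ : ℤ[X]) = 0 := poly_key _ _ le_rfl hbnd haev
  have : γ = 0 := AddMonoidAlgebra.ofCoeff_eq_zero.mp (Polynomial.ofFinsupp_eq_zero.mp hP0)
  rw [hγ] at this
  exact sub_eq_zero.mp this
end

section
/- There is no polynomial P(X) = −1 + Σ_{j=1}^{n−1} a_j X^j + ε X^n with a_j ∈ {−1,0,1} and ε = ±1 such that X² + 3X + 3 divides P(X) − 2 in ℤ[X]. -/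
open Polynomial

/-- There is no `P(X) = -1 + Σ_{j=1}^{n-1} a_j X^j + ε X^n` with
`a_j ∈ {-1,0,1}` and `ε = ±1` such that `X² + 3X + 3` divides `P(X) - 2`
in `ℤ[X]`. -/
theorem no_carry_polynomial_for_X_sq_add_three_X_add_three :
    ¬ ∃ (n : ℕ) (a : ℕ → ℤ) (ε : ℤ), 1 ≤ n ∧
      (∀ j, a j = -1 ∨ a j = 0 ∨ a j = 1) ∧ (ε = 1 ∨ ε = -1) ∧
      ((X : Polynomial ℤ) ^ 2 + 3 * X + 3) ∣
        ((C (-1) + ∑ j ∈ Finset.Ico 1 n, C (a j) * X ^ j + C ε * X ^ n) - 2) := by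
  rintro ⟨n, a, ε, hn, ha, hε, Q, hQ⟩
  set b : ℕ → ℤ := fun k => Q.coeff k with hbdef
  -- the coefficients of the left-hand side
  set c : ℕ → ℤ := fun k =>
    (if k = 0 then (-3 : ℤ) else 0) + (if k ∈ Finset.Ico 1 n then a k else 0)
      + (if k = n then ε else 0) with hcdef
  have hc : ∀ k, ((C (-1) + ∑ j ∈ Finset.Ico 1 n, C (a j) * X ^ j + C ε * X ^ n)
      - (2 : Polynomial ℤ)).coeff k = c k := by
    intro k
    rw [show (2 : Polynomial ℤ) = C 2 by norm_num]
    simp only [coeff_sub, coeff_add, coeff_C, finset_sum_coeff, coeff_C_mul, coeff_X_pow,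
      mul_ite, mul_one, mul_zero, Finset.sum_ite_eq, hcdef]
    by_cases hk : k = 0 <;> simp [hk] <;> ring
  -- the key coefficient relation
  have key : ∀ k, c k = (if 2 ≤ k then b (k-2) else 0) + 3 * (if 1 ≤ k then b (k-1) else 0)
      + 3 * b k := by
    intro k
    rw [← hc k, hQ, show ((X : Polynomial ℤ) ^ 2 + 3 * X + 3) * Q
      = Q * X ^ 2 + 3 * (Q * X ^ 1) + 3 * Q by ring]
    simp only [coeff_add, coeff_ofNat_mul, coeff_mul_X_pow', hbdef]
  -- values of c
  have hc0 : c 0 = -3 := by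
    have h0n : ¬ (0 = n) := by omega
    simp [hcdef, h0n]
  have hcmid : ∀ k, 1 ≤ k → k ≤ n - 1 → c k = a k := by
    intro k h1 h2
    have hmem : k ∈ Finset.Ico 1 n := by simp; omega
    have hkn : ¬ (k = n) := by omega
    simp [hcdef, hmem, hkn]
    omega
  have hctop : c (n + 1) = 0 := by
    simp [hcdef]
  -- by induction, b j = (-1)^(j+1) for j ≤ n-1
  have hbval : ∀ j, j ≤ n - 1 → b j = (-1 : ℤ) ^ (j + 1) := by
    intro j
    induction j using Nat.strong_induction_on with
    | _ j ih =>
      intro hj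
      match j with
      | 0 =>
        have h := key 0
        rw [hc0] at h
        simp at h
        simpa using by omega
      | 1 =>
        have h0 : b 0 = -1 := by have := ih 0 (by omega) (by omega); simpa using this
        have h := key 1
        rw [hcmid 1 (by omega) hj] at h
        simp [h0] at h
        have hA := ha 1
        simpa using by omega
      | (m + 2) =>
        have h0 : b m = (-1 : ℤ) ^ (m + 1) := ih m (by omega) (by omega)
        have h1 : b (m + 1) = (-1 : ℤ) ^ (m + 2) := ih (m + 1) (by omega) (by omega)
        have hk := key (m + 2)
        rw [hcmid (m + 2) (by omega) hj] at hk
        simp only [show m + 2 - 2 = m from rfl, show m + 2 - 1 = m + 1 from rfl,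
          if_pos (by omega : 2 ≤ m + 2), if_pos (by omega : 1 ≤ m + 2)] at hk
        rw [h0, h1] at hk
        have hA := ha (m + 2)
        have hp2 : ((-1 : ℤ)) ^ (m + 2) = -(-1 : ℤ) ^ (m + 1) := by rw [pow_succ]; ring
        have hp3 : ((-1 : ℤ)) ^ (m + 2 + 1) = (-1 : ℤ) ^ (m + 1) := by
          rw [pow_succ, pow_succ]; ring
        rw [hp2] at hk
        rw [hp3]
        rcases neg_one_pow_eq_or ℤ (m + 1) with h | h <;> rw [h] at hk ⊢ <;> omega
  -- contradiction at coefficient n+1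
  have htop := key (n + 1)
  rw [hctop] at htop
  have hbn1 : b (n + 1 - 2) = (-1 : ℤ) ^ n := by
    have h := hbval (n - 1) (le_refl _)
    rw [show n + 1 - 2 = n - 1 by omega, h, show n - 1 + 1 = n by omega]
  rw [if_pos (by omega), if_pos (by omega), hbn1] at htop
  rcases neg_one_pow_eq_or ℤ n with h | h <;> rw [h] at htop <;> omega
end

section
/- Suppose the monic quadratic q(x) = x² − bx + c ∈ ℤ[x] with b² − 4c < 0 divides P(X) − 2 for some P(X) = −1 + Σ_{j=1}^{n−1} a_j X^j + ε X^n with a_j ∈ {−1,0,1}, ε = ±1, and the roots of q are not roots of unity. Then c = 3 and b ∈ {−2,−1,0,1,2}, so the roots of q generate one of the imaginary quadratic fields ℚ(√−3), ℚ(√−11), ℚ(√−2). -/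
open Polynomial

theorem quad_prime_aux (σ : ℤ) (hσ : σ = 1 ∨ σ = -1) :
    Prime ((X : ℤ[X]) ^ 2 - C (3*σ) * X + C 3) := by
  have hmon : ((X : ℤ[X]) ^ 2 - C (3*σ) * X + C 3).Monic := by
    have h : ((X : ℤ[X]) ^ 2 - C (3*σ) * X + C 3) = X^2 + (C (-(3*σ)) * X + C 3) := by
      simp [sub_eq_add_neg]; ring
    rw [h]
    exact monic_X_pow_add (lt_of_le_of_lt (degree_linear_le) (by norm_num))
  have hcast : ((3*σ : ℤ) : ZMod 2) = 1 := by
    rcases hσ with rfl | rfl <;> decide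
  have hirr : Irreducible ((X : ℤ[X]) ^ 2 - C (3*σ) * X + C 3) := by
    apply hmon.irreducible_of_irreducible_map (Int.castRingHom (ZMod 2))
    have hneg : -(X : (ZMod 2)[X]) = X := by
      rw [show -(X : (ZMod 2)[X]) = C (-1) * X by rw [C_neg, C_1, neg_one_mul],
        show ((-1 : ZMod 2)) = 1 by decide, C_1, one_mul]
    have hmap : (((X : ℤ[X]) ^ 2 - C (3*σ) * X + C 3).map (Int.castRingHom (ZMod 2)))
        = X^2 + X + 1 := by
      simp only [Polynomial.map_add, Polynomial.map_sub, Polynomial.map_mul,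
        Polynomial.map_pow, map_C, map_X, Int.coe_castRingHom, hcast,
        show ((3:ℤ) : ZMod 2) = 1 by decide]
      rw [sub_eq_add_neg, C_1, one_mul, hneg]
    rw [hmap]
    have hdeg : ((X : (ZMod 2)[X])^2 + X + 1).natDegree = 2 := by
      have h2 : ((X : (ZMod 2)[X])^2 + X + 1) = C 1 * X^2 + C 1 * X + C 1 := by
        simp
      rw [h2]; exact natDegree_quadratic one_ne_zero
    rw [irreducible_iff_roots_eq_zero_of_degree_le_three (by omega) (by omega)]
    apply Multiset.eq_zero_of_forall_notMem
    intro x hx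
    have hne : ((X : (ZMod 2)[X])^2 + X + 1) ≠ 0 := by
      intro h0; rw [h0] at hdeg; simp at hdeg
    rw [mem_roots hne] at hx
    have hxx := hx
    simp only [IsRoot, eval_add, eval_pow, eval_X, eval_one] at hxx
    revert hxx
    fin_cases x <;> decide
  exact hirr.prime

theorem quad_descent_aux (σ : ℤ) (hσ : σ = 1 ∨ σ = -1) :
    ∀ m : ℕ, ∀ δ : ℤ, ∀ g : ℕ → ℤ, 1 ≤ m → (δ = 1 ∨ δ = -1) →
    (∀ j, 1 ≤ j → j < m → g j = -1 ∨ g j = 0 ∨ g j = 1) →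
    (g m = 1 ∨ g m = -1) →
    ¬ ((X : ℤ[X]) ^ 2 - C (3*σ) * X + C 3 ∣
        C (-3*δ) + ∑ j ∈ Finset.Icc 1 m, C (g j) * X ^ j) := by
  intro m
  induction m using Nat.strong_induction_on with
  | _ m IH =>
  intro δ g hm hδ hg hgm hdvd
  set q : ℤ[X] := X ^ 2 - C (3*σ) * X + C 3 with hq
  have hqp : Prime q := quad_prime_aux σ hσ
  have hqdeg : q.natDegree = 2 := by
    rw [hq, show (X:ℤ[X])^2 - C (3*σ) * X + C 3 = C 1 * X^2 + C (-(3*σ)) * X + C 3 by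
      simp only [C_neg, C_mul, C_1]; ring]
    exact natDegree_quadratic one_ne_zero
  set w : ℤ[X] := C (g 1 - 3*δ*σ) + C δ * X + ∑ j ∈ Finset.Icc 2 m, C (g j) * X ^ (j-1) with hw
  have hins : Finset.Icc 1 m = insert 1 (Finset.Icc 2 m) := by
    ext x; simp only [Finset.mem_Icc, Finset.mem_insert]; omega
  have key : (C (-3*δ) + ∑ j ∈ Finset.Icc 1 m, C (g j) * X ^ j) + C δ * q = X * w := by
    rw [hins, Finset.sum_insert (by simp)]
    rw [hw, hq, mul_add, mul_add, Finset.mul_sum]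
    have hterm : ∀ j ∈ Finset.Icc 2 m, X * (C (g j) * X ^ (j-1)) = C (g j) * X ^ j := by
      intro j hj
      simp only [Finset.mem_Icc] at hj
      rw [show X * (C (g j) * X ^ (j-1)) = C (g j) * (X ^ (j-1) * X) by ring, ← pow_succ]
      congr 2
      omega
    rw [Finset.sum_congr rfl hterm]
    simp only [C_mul, C_sub, C_neg, pow_one]
    ring
  have hXw : q ∣ X * w := by
    rw [← key]
    exact dvd_add hdvd (dvd_mul_left q (C δ))
  have hqX : ¬ (q ∣ X) := by
    rintro ⟨t, ht⟩
    have htne : t ≠ 0 := by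
      rintro rfl
      rw [mul_zero] at ht
      exact X_ne_zero ht
    have := congrArg natDegree ht
    rw [natDegree_X, natDegree_mul hqp.ne_zero htne, hqdeg] at this
    omega
  have hqw : q ∣ w := ((hqp.2.2 X w hXw).resolve_left hqX)
  -- mod 3
  have h3 : ((3:ℤ) : ZMod 3) = 0 := by decide
  have hqmap : q.map (Int.castRingHom (ZMod 3)) = X^2 := by
    simp only [hq, Polynomial.map_add, Polynomial.map_sub, Polynomial.map_mul,
      Polynomial.map_pow, map_C, map_X, Int.coe_castRingHom, Int.cast_mul, h3, C_0]
    simp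
  obtain ⟨t, ht⟩ : (X:(ZMod 3)[X])^2 ∣ w.map (Int.castRingHom (ZMod 3)) := by
    rw [← hqmap]
    exact Polynomial.map_dvd _ hqw
  have hcoeff : ∀ k : ℕ, k < 2 → ((w.coeff k : ℤ) : ZMod 3) = 0 := by
    intro k hk
    have h1 : (w.map (Int.castRingHom (ZMod 3))).coeff k = ((w.coeff k : ℤ) : ZMod 3) := by
      rw [Polynomial.coeff_map]; rfl
    rw [← h1, ht]
    rcases (by omega : k = 0 ∨ k = 1) with rfl | rfl
    · rw [show (X:(ZMod 3)[X])^2 * t = X * (X * t) by ring, Polynomial.mul_coeff_zero,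
        coeff_X_zero, zero_mul]
    · rw [show (X:(ZMod 3)[X])^2 * t = X * (X * t) by ring,
        show (1:ℕ) = 0 + 1 by rfl, Polynomial.coeff_X_mul, Polynomial.mul_coeff_zero,
        coeff_X_zero, zero_mul]
  -- coeff 0 of w
  have hw0 : w.coeff 0 = g 1 - 3*δ*σ := by
    rw [hw]
    simp only [coeff_add, Polynomial.finset_sum_coeff, coeff_C_mul, coeff_X_pow, coeff_C,
      coeff_X_zero, mul_zero]
    rw [Finset.sum_eq_zero]
    · simp
    intro j hj
    simp only [Finset.mem_Icc] at hj
    rw [if_neg (by omega), mul_zero]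
  have hdg1 : (3:ℤ) ∣ g 1 := by
    have h0 := (ZMod.intCast_zmod_eq_zero_iff_dvd (g 1 - 3*δ*σ) 3).mp (by
      rw [← hw0]; exact hcoeff 0 (by omega))
    have h0' : (3:ℤ) ∣ g 1 - 3*δ*σ := by exact_mod_cast h0
    have : g 1 = (g 1 - 3*δ*σ) + 3*(δ*σ) := by ring
    rw [this]
    exact dvd_add h0' ⟨δ*σ, rfl⟩
  -- m = 1 impossible
  have hm1 : m ≠ 1 := by
    rintro rfl
    rcases hgm with h | h <;> omega
  have hm2 : 2 ≤ m := by omega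
  have hg1 : g 1 = 0 := by
    have := hg 1 (le_refl _) (by omega)
    omega
  -- coeff 1 of w
  have hw1 : w.coeff 1 = δ + g 2 := by
    rw [hw]
    simp only [coeff_add, Polynomial.finset_sum_coeff, coeff_C_mul, coeff_X_pow, coeff_C,
      coeff_X_one, mul_one, if_neg (one_ne_zero)]
    rw [Finset.sum_eq_single_of_mem 2 (by simp [Finset.mem_Icc]; omega)]
    · norm_num
    intro j hj hjne
    simp only [Finset.mem_Icc] at hj
    rw [if_neg (by omega), mul_zero]
  have hdg2 : (3:ℤ) ∣ δ + g 2 := by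
    have h0 := (ZMod.intCast_zmod_eq_zero_iff_dvd (δ + g 2) 3).mp (by
      rw [← hw1]; exact hcoeff 1 (by omega))
    exact_mod_cast h0
  have hg2 : g 2 = -δ := by
    rcases (show g 2 = -1 ∨ g 2 = 0 ∨ g 2 = 1 from by
      rcases Nat.lt_or_ge 2 m with h | h
      · exact hg 2 (by omega) h
      · have : m = 2 := by omega
        subst this
        rcases hgm with h | h <;> omega) with h | h | h <;> rcases hδ with rfl | rfl <;> omega
  -- case m = 2
  rcases Nat.lt_or_ge m 3 with hm3 | hm3
  · have hmeq : m = 2 := by omega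
    subst hmeq
    have hweq : w = C (-3*(δ*σ)) := by
      rw [hw, Finset.Icc_self, Finset.sum_singleton, hg1, hg2]
      simp only [C_sub, C_mul, C_neg, C_0, pow_one]
      ring
    rw [hweq] at hqw
    obtain ⟨t, ht⟩ := hqw
    have htne : t ≠ 0 := by
      rintro rfl
      rw [mul_zero, C_eq_zero] at ht
      rcases hδ with rfl | rfl <;> rcases hσ with rfl | rfl <;> omega
    have := congrArg natDegree ht
    rw [natDegree_C, natDegree_mul hqp.ne_zero htne, hqdeg] at this
    omega
  -- case m ≥ 3 : recurse
  · obtain ⟨M, rfl⟩ : ∃ M, m = M + 1 := ⟨m - 1, by omega⟩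
    have hM2 : 2 ≤ M := by omega
    have hweq : w = C (-3*(δ*σ)) +
        ∑ j ∈ Finset.Icc 1 M, C (if j = 1 then 0 else g (j+1)) * X ^ j := by
      have hins2 : Finset.Icc 2 (M+1) = insert 2 (Finset.Icc 3 (M+1)) := by
        ext x; simp only [Finset.mem_Icc, Finset.mem_insert]; omega
      have hins3 : Finset.Icc 1 M = insert 1 (Finset.Icc 2 M) := by
        ext x; simp only [Finset.mem_Icc, Finset.mem_insert]; omega
      rw [hw, hins2, Finset.sum_insert (by simp), hins3, Finset.sum_insert (by simp)]
      rw [hg1, hg2]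
      have hre : ∑ j ∈ Finset.Icc 3 (M+1), C (g j) * X ^ (j-1)
          = ∑ i ∈ Finset.Icc 2 M, C (if i = 1 then 0 else g (i+1)) * X ^ i := by
        rw [show (3:ℕ) = 2 + 1 by rfl, ← Finset.map_add_right_Icc, Finset.sum_map]
        apply Finset.sum_congr rfl
        intro i hi
        simp only [Finset.mem_Icc] at hi
        simp only [addRightEmbedding_apply]
        rw [if_neg (by omega), show i + 1 - 1 = i by omega]
      rw [hre]
      norm_num [C_sub, C_mul, C_neg, C_0]
      ring
    have hqw' : q ∣ C (-3*(δ*σ)) +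
        ∑ j ∈ Finset.Icc 1 M, C (if j = 1 then 0 else g (j+1)) * X ^ j := by
      rw [← hweq]; exact hqw
    exact IH M (by omega) (δ*σ) (fun i => if i = 1 then 0 else g (i+1)) (by omega)
      (by rcases hδ with rfl | rfl <;> rcases hσ with rfl | rfl <;> norm_num)
      (by
        intro j hj1 hjm
        by_cases hj : j = 1
        · simp [hj]
        · simp only [if_neg hj]
          exact hg (j+1) (by omega) (by omega))
      (by
        simp only [if_neg (show M ≠ 1 by omega)]
        exact hgm)
      hqw'

/-- If a monic quadratic `q(x) = x² - bx + c ∈ ℤ[x]` with `b² - 4c < 0`, whose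
complex roots are not roots of unity, divides `P(X) - 2` for some
`P(X) = -1 + Σ_{j=1}^{n-1} a_j X^j + ε X^n` with `a_j ∈ {-1,0,1}`, `ε = ±1`,
then `c = 3` and `b ∈ {-2,-1,0,1,2}`. -/
theorem quadratic_divisor_of_carry_polynomial
    (b c : ℤ) (hdisc : b ^ 2 - 4 * c < 0)
    (hroots : ∀ z : ℂ, z ^ 2 - (b : ℂ) * z + (c : ℂ) = 0 →
      ∀ k : ℕ, 0 < k → z ^ k ≠ 1)
    (n : ℕ) (a : ℕ → ℤ) (ε : ℤ) (hn : 1 ≤ n)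
    (ha : ∀ j, a j = -1 ∨ a j = 0 ∨ a j = 1) (hε : ε = 1 ∨ ε = -1)
    (hdvd : ((X : Polynomial ℤ) ^ 2 - C b * X + C c) ∣
      ((C (-1) + ∑ j ∈ Finset.Ico 1 n, C (a j) * X ^ j + C ε * X ^ n) - 2)) :
    c = 3 ∧ (b = -2 ∨ b = -1 ∨ b = 0 ∨ b = 1 ∨ b = 2) := by
  -- rewrite the dividend in Icc form
  have hFeq : ((C (-1) + ∑ j ∈ Finset.Ico 1 n, C (a j) * X ^ j + C ε * X ^ n) - 2 : ℤ[X])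
      = C (-3*(1:ℤ)) + ∑ j ∈ Finset.Icc 1 n, C (if j = n then ε else a j) * X ^ j := by
    have hins : Finset.Icc 1 n = insert n (Finset.Ico 1 n) := by
      ext x; simp only [Finset.mem_Icc, Finset.mem_Ico, Finset.mem_insert]; omega
    have hsum : ∑ j ∈ Finset.Ico 1 n, C (if j = n then ε else a j) * X ^ j
        = ∑ j ∈ Finset.Ico 1 n, C (a j) * X ^ j := by
      apply Finset.sum_congr rfl
      intro j hj
      simp only [Finset.mem_Ico] at hj
      rw [if_neg (by omega)]
    rw [hins, Finset.sum_insert (by simp [Finset.mem_Ico]), if_pos rfl, hsum]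
    have h2 : (2 : ℤ[X]) = C 2 := by norm_num
    have hC : C (-3*(1:ℤ)) = C (-1) - C 2 := by rw [← C_sub]; norm_num
    rw [h2, hC]
    ring
  rw [hFeq] at hdvd
  -- c divides 3
  have hc3 : c ∣ 3 := by
    obtain ⟨h, hh⟩ := hdvd
    have he := congrArg (Polynomial.eval 0) hh
    have hL : ((C (-3*(1:ℤ)) + ∑ j ∈ Finset.Icc 1 n, C (if j = n then ε else a j) * X ^ j)
        : ℤ[X]).eval 0 = -3 := by
      simp only [eval_add, eval_C, Polynomial.eval_finset_sum, eval_mul, eval_pow, eval_X]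
      rw [Finset.sum_eq_zero]
      · norm_num
      intro j hj
      simp only [Finset.mem_Icc] at hj
      rw [zero_pow (by omega : j ≠ 0), mul_zero]
    rw [hL] at he
    simp only [eval_mul, eval_add, eval_sub, eval_pow, eval_X, eval_C] at he
    have : (-3 : ℤ) = c * (Polynomial.eval 0 h) := by rw [he]; ring
    have hdvdneg : c ∣ (-3 : ℤ) := ⟨_, this⟩
    exact (dvd_neg.mp hdvdneg)
  have hcpos : 0 < c := by nlinarith [sq_nonneg b]
  have hcle : c ≤ 3 := Int.le_of_dvd (by norm_num) hc3
  -- complex sqrt 3 fact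
  have hs : ((Real.sqrt 3 : ℝ) : ℂ)^2 = 3 := by
    rw [← Complex.ofReal_pow, Real.sq_sqrt (by norm_num : (3:ℝ) ≥ 0)]
    norm_num
  set s : ℂ := ((Real.sqrt 3 : ℝ) : ℂ) with hsdef
  interval_cases c
  · -- c = 1 : roots of unity cases
    exfalso
    have hb1 : -1 ≤ b := by nlinarith
    have hb2 : b ≤ 1 := by nlinarith
    interval_cases b
    · -- b = -1 : z = (-1 + √3 i)/2, z^3 = 1
      have hz : ((-1 + s*Complex.I)/2)^2 - ((-1 : ℤ) : ℂ) * ((-1 + s*Complex.I)/2)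
          + ((1:ℤ):ℂ) = 0 := by
        push_cast
        linear_combination (s^2/4) * Complex.I_sq - (1/4) * hs
      exact hroots _ hz 3 (by norm_num) (by
        linear_combination ((-1 + s*Complex.I)/2 - 1) * hz)
    · -- b = 0 : z = i, z^4 = 1
      have hz : (Complex.I)^2 - ((0 : ℤ) : ℂ) * Complex.I + ((1:ℤ):ℂ) = 0 := by
        push_cast
        simp [Complex.I_sq]
      exact hroots _ hz 4 (by norm_num) (by
        linear_combination ((Complex.I)^2 - 1) * hz)
    · -- b = 1 : z = (1 + √3 i)/2, z^6 = 1
      have hz : ((1 + s*Complex.I)/2)^2 - ((1 : ℤ) : ℂ) * ((1 + s*Complex.I)/2)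
          + ((1:ℤ):ℂ) = 0 := by
        push_cast
        linear_combination (s^2/4) * Complex.I_sq - (1/4) * hs
      exact hroots _ hz 6 (by norm_num) (by
        linear_combination (((1 + s*Complex.I)/2)^4 + ((1 + s*Complex.I)/2)^3
          - ((1 + s*Complex.I)/2) - 1) * hz)
  · -- c = 2 : impossible
    exfalso
    norm_num at hc3
  · -- c = 3
    have hb1 : -3 ≤ b := by nlinarith
    have hb2 : b ≤ 3 := by nlinarith
    refine ⟨rfl, ?_⟩
    interval_cases b
    · -- b = -3
      exfalso
      refine quad_descent_aux (-1) (Or.inr rfl) n 1 (fun j => if j = n then ε else a j) hn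
        (Or.inl rfl)
        (fun j hj1 hjn => by rw [if_neg (by omega)]; exact ha j)
        (by rw [if_pos rfl]; exact hε) ?_
      rw [show ((3:ℤ)*(-1)) = -3 by norm_num]
      exact hdvd
    · norm_num
    · norm_num
    · norm_num
    · norm_num
    · norm_num
    · -- b = 3
      exfalso
      refine quad_descent_aux 1 (Or.inl rfl) n 1 (fun j => if j = n then ε else a j) hn
        (Or.inl rfl)
        (fun j hj1 hjn => by rw [if_neg (by omega)]; exact ha j)
        (by rw [if_pos rfl]; exact hε) ?_
      rw [show ((3:ℤ)*1) = 3 by norm_num]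
      exact hdvd
end
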